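/- arXiv:1103.4032 — 7 statements merged into one kernel-verified Lean document; each statement's English description precedes it below -/
import Mathlib

section
/- Let d ≥ 1 and n ≥ 1, and let ρ be a density matrix on (ℂ^d)^{⊗n} (system registers A₁,…,Aₙ) that is strictly classically correlated. Then there exist unitaries U₁,…,Uₙ on ℂ^d such that the output of the activation protocol, ρ̃ = V (ρ ⊗ |0⟩⟨0|^{⊗n}) V† with V = C_{A:A'} · (U₁⊗⋯⊗Uₙ ⊗ 𝟙_{A'}), is separable across the bipartite cut A : A' (where A = A₁…Aₙ and A' = A'₁…A'ₙ). -/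
open Matrix Kronecker BigOperators
open scoped ComplexOrder

noncomputable section

/-- `n`-fold Kronecker/tensor product of single-qudit matrices, acting on
`(ℂ^d)^{⊗ n}` indexed by multi-indices in `Fin n → ZMod d`. -/
def piTensor {d n : ℕ} (U : Fin n → Matrix (ZMod d) (ZMod d) ℂ) :
    Matrix (Fin n → ZMod d) (Fin n → ZMod d) ℂ :=
  Matrix.of fun j k => ∏ i, U i (j i) (k i)

/-- The generalized CNOT gate `C_{A:A'} = ⊗ᵢ C_{Aᵢ:A'ᵢ}` on `n` system-ancilla qudit
pairs: `C |j⟩|j'⟩ = |j⟩|j' ⊕ j⟩` with addition modulo `d` (componentwise). -/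
def cnotN (d n : ℕ) :
    Matrix ((Fin n → ZMod d) × (Fin n → ZMod d)) ((Fin n → ZMod d) × (Fin n → ZMod d)) ℂ :=
  Matrix.of fun p q => if p.1 = q.1 ∧ p.2 = q.2 + q.1 then 1 else 0

/-- The initial ancilla state `|0⟩⟨0|^{⊗ n}`. -/
def anc0 (d n : ℕ) : Matrix (Fin n → ZMod d) (Fin n → ZMod d) ℂ :=
  Matrix.of fun j k => if j = 0 ∧ k = 0 then 1 else 0

/-- The output `ρ̃ = V (ρ ⊗ |0⟩⟨0|^{⊗n}) V†` of the activation protocol, where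
`V = C_{A:A'} · (U₁ ⊗ ⋯ ⊗ Uₙ ⊗ 𝟙_{A'})`. -/
def outState {d n : ℕ} [NeZero d] (ρ : Matrix (Fin n → ZMod d) (Fin n → ZMod d) ℂ)
    (U : Fin n → Matrix (ZMod d) (ZMod d) ℂ) :
    Matrix ((Fin n → ZMod d) × (Fin n → ZMod d)) ((Fin n → ZMod d) × (Fin n → ZMod d)) ℂ :=
  (cnotN d n * (piTensor U ⊗ₖ (1 : Matrix (Fin n → ZMod d) (Fin n → ZMod d) ℂ))) *
    (ρ ⊗ₖ anc0 d n) *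
  (cnotN d n * (piTensor U ⊗ₖ (1 : Matrix (Fin n → ZMod d) (Fin n → ZMod d) ℂ)))ᴴ

/-- A bipartite state on `H_A ⊗ H_{A'}` is separable across `A : A'` if it is a finite
convex combination of tensor products of rank-one projectors onto unit vectors. -/
def SeparableState {α β : Type*} [Fintype α] [Fintype β]
    (σ : Matrix (α × β) (α × β) ℂ) : Prop :=
  ∃ (N : ℕ) (q : Fin N → ℝ) (ψ : Fin N → α → ℂ) (φ : Fin N → β → ℂ),
    (∀ a, 0 ≤ q a) ∧ (∑ a, q a = 1) ∧
    (∀ a, ∑ x, ‖ψ a x‖ ^ 2 = 1) ∧ (∀ a, ∑ x, ‖φ a x‖ ^ 2 = 1) ∧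
    σ = ∑ a, (q a : ℂ) • (vecMulVec (ψ a) (star (ψ a)) ⊗ₖ vecMulVec (φ a) (star (φ a)))

/-- An `n`-qudit state is strictly classically correlated if there are local orthonormal
bases (encoded as the columns of local unitaries `B i`) with respect to whose tensor
product the state is diagonal. -/
def StrictlyClassical {d n : ℕ} [NeZero d]
    (ρ : Matrix (Fin n → ZMod d) (Fin n → ZMod d) ℂ) : Prop :=
  ∃ B : Fin n → Matrix (ZMod d) (ZMod d) ℂ,
    (∀ i, B i ∈ Matrix.unitaryGroup (ZMod d) ℂ) ∧
    ((piTensor B)ᴴ * ρ * piTensor B).IsDiag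

lemma piTensor_conjTranspose {d n : ℕ} (U : Fin n → Matrix (ZMod d) (ZMod d) ℂ) :
    (piTensor U)ᴴ = piTensor (fun i => (U i)ᴴ) := by
  ext j k
  simp [piTensor, conjTranspose_apply, star_prod]

lemma piTensor_mul {d n : ℕ} [NeZero d] (U V : Fin n → Matrix (ZMod d) (ZMod d) ℂ) :
    piTensor U * piTensor V = piTensor (fun i => U i * V i) := by
  ext j k
  simp only [mul_apply, piTensor, of_apply]
  rw [show (∏ i, ∑ m, U i (j i) m * V i m (k i)) =
      ∑ x : Fin n → ZMod d, ∏ i, U i (j i) (x i) * V i (x i) (k i) from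
    Fintype.prod_sum _]
  simp [Finset.prod_mul_distrib]

lemma piTensor_one {d n : ℕ} :
    piTensor (fun _ : Fin n => (1 : Matrix (ZMod d) (ZMod d) ℂ)) = 1 := by
  ext j k
  simp [piTensor, one_apply, Finset.prod_boole, funext_iff]

lemma kron_conjTranspose {d n : ℕ} (A B : Matrix (Fin n → ZMod d) (Fin n → ZMod d) ℂ) :
    (A ⊗ₖ B)ᴴ = Aᴴ ⊗ₖ Bᴴ := by
  ext p q
  simp [conjTranspose_apply, mul_comm]

lemma cnot_mul_apply {d n : ℕ} [NeZero d]
    (Y : Matrix ((Fin n → ZMod d) × (Fin n → ZMod d)) ((Fin n → ZMod d) × (Fin n → ZMod d)) ℂ)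
    (p q : (Fin n → ZMod d) × (Fin n → ZMod d)) :
    (cnotN d n * Y) p q = Y (p.1, p.2 - p.1) q := by
  rw [Matrix.mul_apply, Finset.sum_eq_single (p.1, p.2 - p.1)]
  · simp [cnotN]
  · rintro ⟨b1, b2⟩ - hb
    have : ¬(p.1 = b1 ∧ p.2 = b2 + b1) := by
      rintro ⟨h1, h2⟩
      exact hb (by simp [Prod.ext_iff, ← h1, h2])
    simp [cnotN, this]
  · simp

lemma mul_cnotT_apply {d n : ℕ} [NeZero d]
    (Y : Matrix ((Fin n → ZMod d) × (Fin n → ZMod d)) ((Fin n → ZMod d) × (Fin n → ZMod d)) ℂ)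
    (p q : (Fin n → ZMod d) × (Fin n → ZMod d)) :
    (Y * (cnotN d n)ᴴ) p q = Y p (q.1, q.2 - q.1) := by
  rw [Matrix.mul_apply, Finset.sum_eq_single (q.1, q.2 - q.1)]
  · simp [cnotN, conjTranspose_apply]
  · rintro ⟨b1, b2⟩ - hb
    have : ¬(q.1 = b1 ∧ q.2 = b2 + b1) := by
      rintro ⟨h1, h2⟩
      exact hb (by simp [Prod.ext_iff, ← h1, h2])
    simp [cnotN, conjTranspose_apply, this]
  · simp

/-- If the input `n`-qudit density matrix is strictly classically correlated, then there
is an adversarial choice of local unitaries such that the output of the activation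
protocol is separable across the system : ancilla cut. -/
theorem classical_implies_separable_output (d n : ℕ) [NeZero d] (hn : 1 ≤ n)
    (ρ : Matrix (Fin n → ZMod d) (Fin n → ZMod d) ℂ)
    (hρ : ρ.PosSemidef) (hρtr : ρ.trace = 1)
    (hcl : StrictlyClassical ρ) :
    ∃ U : Fin n → Matrix (ZMod d) (ZMod d) ℂ,
      (∀ i, U i ∈ Matrix.unitaryGroup (ZMod d) ℂ) ∧
      SeparableState (outState ρ U) := by
  obtain ⟨B, hB, hdiag⟩ := hcl
  set P := piTensor B with hP
  set D := Pᴴ * ρ * P with hDdef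
  refine ⟨fun i => (B i)ᴴ, fun i => ?_, ?_⟩
  · rw [Matrix.mem_unitaryGroup_iff, Matrix.star_eq_conjTranspose,
      conjTranspose_conjTranspose]
    have := (Matrix.mem_unitaryGroup_iff').mp (hB i)
    rwa [Matrix.star_eq_conjTranspose] at this
  -- basic facts about D
  have hPU : piTensor (fun i => (B i)ᴴ) = Pᴴ := (piTensor_conjTranspose B).symm
  have hBBH : ∀ i, B i * (B i)ᴴ = 1 := by
    intro i
    have := (Matrix.mem_unitaryGroup_iff).mp (hB i)
    rwa [Matrix.star_eq_conjTranspose] at this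
  have hPPH : P * Pᴴ = 1 := by
    rw [piTensor_conjTranspose, hP, piTensor_mul]
    simp only [hBBH]
    exact piTensor_one
  have hDpsd : D.PosSemidef := hρ.conjTranspose_mul_mul_same P
  have hDtr : D.trace = 1 := by
    rw [hDdef, Matrix.trace_mul_comm, ← mul_assoc, hPPH, one_mul, hρtr]
  have hDdiag : ∀ j : Fin n → ZMod d, 0 ≤ D j j := by
    intro j
    have h := hDpsd.dotProduct_mulVec_nonneg (Pi.single j 1)
    simpa [dotProduct, Matrix.mulVec_single, Pi.single_apply, apply_ite] using h
  have hDre : ∀ j, ((D j j).re : ℂ) = D j j := by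
    intro j
    obtain ⟨hre, him⟩ := Complex.nonneg_iff.mp (hDdiag j)
    exact Complex.ext rfl him
  have hDoff : ∀ j k : Fin n → ZMod d, j ≠ k → D j k = 0 := fun j k h => hdiag h
  -- rewrite the output state
  have key : outState ρ (fun i => (B i)ᴴ) =
      cnotN d n * ((D ⊗ₖ anc0 d n) * (cnotN d n)ᴴ) := by
    have hD_kron : (D ⊗ₖ anc0 d n) =
        (Pᴴ ⊗ₖ (1 : Matrix (Fin n → ZMod d) (Fin n → ZMod d) ℂ)) * (ρ ⊗ₖ anc0 d n) *
          (P ⊗ₖ (1 : Matrix (Fin n → ZMod d) (Fin n → ZMod d) ℂ)) := by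
      conv_lhs => rw [hDdef,
        show (anc0 d n) = 1 * anc0 d n * 1 from by rw [Matrix.one_mul, Matrix.mul_one],
        Matrix.mul_kronecker_mul, Matrix.mul_kronecker_mul]
    unfold outState
    rw [hPU, Matrix.conjTranspose_mul, kron_conjTranspose, conjTranspose_conjTranspose,
      conjTranspose_one, hD_kron]
    simp only [mul_assoc]
  rw [key]
  -- separable decomposition
  set e := Fintype.equivFin (Fin n → ZMod d) with he
  refine ⟨Fintype.card (Fin n → ZMod d),
    fun a => (D (e.symm a) (e.symm a)).re,
    fun a x => if x = e.symm a then 1 else 0,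
    fun a x => if x = e.symm a then 1 else 0,
    fun a => (Complex.nonneg_iff.mp (hDdiag _)).1, ?_, ?_, ?_, ?_⟩
  · calc ∑ a, (D (e.symm a) (e.symm a)).re
        = (∑ a, D (e.symm a) (e.symm a)).re := by
          rw [Complex.re_sum]
      _ = (∑ j, D j j).re := by rw [Equiv.sum_comp e.symm (fun j => D j j)]
      _ = (D.trace).re := rfl
      _ = 1 := by rw [hDtr, Complex.one_re]
  · intro a
    simp [apply_ite, Finset.sum_ite_eq']
  · intro a
    simp [apply_ite, Finset.sum_ite_eq']
  · ext p q
    rw [cnot_mul_apply, mul_cnotT_apply, Matrix.sum_apply]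
    obtain ⟨p1, p2⟩ := p
    obtain ⟨q1, q2⟩ := q
    simp only [Matrix.smul_apply, kroneckerMap_apply, vecMulVec_apply, Pi.star_apply,
      apply_ite star, star_one, star_zero, smul_eq_mul, anc0, Matrix.of_apply]
    rw [Finset.sum_eq_single (e p1)]
    · simp only [Equiv.symm_apply_apply]
      by_cases h1 : q1 = p1
      · by_cases h2 : p2 = p1 <;> by_cases h3 : q2 = p1 <;>
          simp [h1, h2, h3, sub_eq_zero, hDre]
      · have h0 : D p1 q1 = 0 := hDoff _ _ (fun h => h1 h.symm)
        simp [h1, h0]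
    · intro b _ hb
      have hne : p1 ≠ e.symm b := fun h => hb (by rw [h, Equiv.apply_symm_apply])
      simp [hne]
    · simp
end
end

section
/- Let d ≥ 1 and n ≥ 1, let ρ be a density matrix on (ℂ^d)^{⊗n}, and let U_A = U₁⊗⋯⊗Uₙ be any tensor product of unitaries on ℂ^d. Then the output ρ̃ = V (ρ ⊗ |0⟩⟨0|^{⊗n}) V† of the activation protocol, with V = C_{A:A'} · (U_A ⊗ 𝟙_{A'}), has matrix entries ρ̃_{(j,j'),(k,k')} = δ_{j',j} · δ_{k',k} · (U_A ρ U_A†)_{j,k} for multi-indices j, j', k, k' ∈ (ZMod d)^n; equivalently, ρ̃ = Σ_{k,l} (U_A ρ U_A†)_{k,l} |k⟩⟨l|_A ⊗ |k⟩⟨l|_{A'} is in maximally correlated form across A : A'. -/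
open Matrix Kronecker BigOperators
open scoped ComplexOrder

noncomputable section

lemma cnotN_eq (d n : ℕ) (p r : (Fin n → ZMod d) × (Fin n → ZMod d)) :
    cnotN d n p r = if r = (p.1, p.2 - p.1) then 1 else 0 := by
  unfold cnotN
  simp only [Matrix.of_apply]
  congr 1
  simp only [Prod.ext_iff, eq_iff_iff]
  constructor
  · rintro ⟨h1, h2⟩; exact ⟨h1.symm, by rw [h2, ← h1]; ring⟩
  · rintro ⟨h1, h2⟩; exact ⟨h1.symm, by rw [h2, h1]; ring⟩

lemma M_apply {d n : ℕ} [NeZero d] (U : Fin n → Matrix (ZMod d) (ZMod d) ℂ)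
    (p q : (Fin n → ZMod d) × (Fin n → ZMod d)) :
    (cnotN d n * (piTensor U ⊗ₖ (1 : Matrix (Fin n → ZMod d) (Fin n → ZMod d) ℂ))) p q
      = piTensor U p.1 q.1 * (if p.2 - p.1 = q.2 then 1 else 0) := by
  rw [Matrix.mul_apply]
  simp only [cnotN_eq, ite_mul, one_mul, zero_mul, kroneckerMap_apply, Matrix.one_apply]
  rw [Finset.sum_eq_single (p.1, p.2 - p.1)]
  · simp
  · intro b _ hb; simp [hb]
  · simp

lemma triple {m : Type*} [Fintype m]
    (A B C : Matrix m m ℂ) (p q : m) :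
    (A * B * Cᴴ) p q = ∑ a, ∑ b, A p a * B a b * star (C q b) := by
  simp only [Matrix.mul_apply, Matrix.conjTranspose_apply, Finset.sum_mul]
  rw [Finset.sum_comm]

lemma out_apply {d n : ℕ} [NeZero d] (ρ : Matrix (Fin n → ZMod d) (Fin n → ZMod d) ℂ)
    (U : Fin n → Matrix (ZMod d) (ZMod d) ℂ) (j j' k k' : Fin n → ZMod d) :
    outState ρ U (j, j') (k, k') =
      if j' = j ∧ k' = k then (piTensor U * ρ * (piTensor U)ᴴ) j k else 0 := by
  unfold outState
  rw [triple]
  simp only [M_apply, kroneckerMap_apply, anc0, Matrix.of_apply]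
  simp only [Fintype.sum_prod_type]
  simp only [star_mul', apply_ite (star : ℂ → ℂ), star_one, star_zero, mul_ite, ite_mul,
    mul_one, mul_zero, one_mul, zero_mul, ite_and, Finset.sum_ite_irrel, Finset.sum_const_zero,
    Finset.sum_ite_eq, Finset.mem_univ, if_true]
  simp only [Finset.sum_ite_eq', Finset.mem_univ, if_true, sub_eq_zero, Finset.sum_ite_irrel,
    Finset.sum_const_zero]
  rw [← triple (piTensor U) ρ (piTensor U) j k]
  split_ifs <;> rfl

/-- The output of the activation protocol has the maximally correlated form
`ρ̃ = Σ_{k,l} (U_A ρ U_A†)_{k,l} |k⟩⟨l|_A ⊗ |k⟩⟨l|_{A'}`; entrywise,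
`ρ̃_{(j,j'),(k,k')} = δ_{j',j} δ_{k',k} (U_A ρ U_A†)_{j,k}`. -/
theorem outState_maximally_correlated (d n : ℕ) [NeZero d] (hn : 1 ≤ n)
    (ρ : Matrix (Fin n → ZMod d) (Fin n → ZMod d) ℂ)
    (hρ : ρ.PosSemidef) (hρtr : ρ.trace = 1)
    (U : Fin n → Matrix (ZMod d) (ZMod d) ℂ)
    (hU : ∀ i, U i ∈ Matrix.unitaryGroup (ZMod d) ℂ) :
    (∀ j j' k k' : Fin n → ZMod d,
      outState ρ U (j, j') (k, k') =
        if j' = j ∧ k' = k then (piTensor U * ρ * (piTensor U)ᴴ) j k else 0) ∧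
    outState ρ U =
      ∑ k : Fin n → ZMod d, ∑ l : Fin n → ZMod d,
        Matrix.single (k, k) (l, l) ((piTensor U * ρ * (piTensor U)ᴴ) k l) := by
  refine ⟨fun j j' k k' => out_apply ρ U j j' k k', ?_⟩
  ext ⟨j, j'⟩ ⟨k, k'⟩
  rw [out_apply]
  simp only [Matrix.sum_apply, Matrix.single, Matrix.of_apply, Prod.mk.injEq, ite_and,
    Finset.sum_ite_irrel, Finset.sum_const_zero, Finset.sum_ite_eq', Finset.sum_ite_eq,
    Finset.mem_univ, if_true]
  split_ifs <;> simp_all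
end
end

section
/- Let ρ be a density matrix on ℂ^D (entries ρ_{k,l}), and let ρ̃ = Σ_{k,l} ρ_{k,l} |k⟩⟨l| ⊗ |k⟩⟨l| be the corresponding maximally correlated state on ℂ^D ⊗ ℂ^D. Then the trace norm of the partial transpose of ρ̃ on the first factor satisfies ‖ρ̃^{T_A}‖₁ = Σ_k ρ_{k,k} + Σ_{k≠l} |ρ_{k,l}| = 1 + Σ_{k≠l} |ρ_{k,l}|; consequently the negativity of ρ̃, defined as N(ρ̃) = (‖ρ̃^{T_A}‖₁ − 1)/2, equals (Σ_{k≠l} |ρ_{k,l}|)/2. -/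
open Matrix Kronecker BigOperators
open scoped ComplexOrder

noncomputable section

/-- Trace norm `‖X‖₁ = Tr √(X†X)` of a square complex matrix. -/
def traceNorm {m : Type*} [Fintype m] [DecidableEq m] (X : Matrix m m ℂ) : ℝ :=
  (((Matrix.posSemidef_conjTranspose_mul_self X).1.eigenvectorUnitary : Matrix m m ℂ) *
      diagonal (((↑) : ℝ → ℂ) ∘ (√·) ∘ (Matrix.posSemidef_conjTranspose_mul_self X).1.eigenvalues) *
      (star ((Matrix.posSemidef_conjTranspose_mul_self X).1.eigenvectorUnitary :
        Matrix m m ℂ))).trace.re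

/-- The maximally correlated state `ρ̃ = Σ_{k,l} ρ_{k,l} |k⟩⟨l| ⊗ |k⟩⟨l|` on
`ℂ^D ⊗ ℂ^D` built from a matrix `ρ` on `ℂ^D`. -/
def maxCorr {D : ℕ} (ρ : Matrix (Fin D) (Fin D) ℂ) :
    Matrix (Fin D × Fin D) (Fin D × Fin D) ℂ :=
  Matrix.of fun p q => if p.1 = p.2 ∧ q.1 = q.2 then ρ p.1 q.1 else 0

/-- The partial transpose on the first tensor factor:
`(X^{T_A})_{(j,j'),(k,k')} = X_{(k,j'),(j,k')}`. -/
def ptA {D : ℕ} (X : Matrix (Fin D × Fin D) (Fin D × Fin D) ℂ) :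
    Matrix (Fin D × Fin D) (Fin D × Fin D) ℂ :=
  Matrix.of fun p q => X (q.1, p.2) (p.1, q.2)

open scoped MatrixOrder in
lemma sqrt_eq_of_sq_eq' {m : Type*} [Fintype m] [DecidableEq m] (X B : Matrix m m ℂ)
    (hB : B.PosSemidef) (h : B ^ 2 = Xᴴ * X) :
    ((Matrix.posSemidef_conjTranspose_mul_self X).1.eigenvectorUnitary : Matrix m m ℂ) *
      diagonal (((↑) : ℝ → ℂ) ∘ (√·) ∘ (Matrix.posSemidef_conjTranspose_mul_self X).1.eigenvalues) *
      (star ((Matrix.posSemidef_conjTranspose_mul_self X).1.eigenvectorUnitary :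
        Matrix m m ℂ)) = B := by
  have hA := posSemidef_conjTranspose_mul_self X
  have h1 : CFC.sqrt (Xᴴ * X) = B := CFC.sqrt_unique (by rw [← pow_two]; exact h) hB.nonneg
  rw [CFC.sqrt_eq_cfc, cfc_nnreal_eq_real _ _ hA.nonneg, hA.1.cfc_eq] at h1
  rw [← h1, IsHermitian.cfc, Unitary.conjStarAlgAut_apply]
  congr 3
  funext i
  simp [Real.coe_sqrt, Real.coe_toNNReal', hA.eigenvalues_nonneg i]

lemma key {D : ℕ} (ρ : Matrix (Fin D) (Fin D) ℂ) :
    (ptA (maxCorr ρ))ᴴ * (ptA (maxCorr ρ)) =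
      Matrix.diagonal (fun p : Fin D × Fin D => ((‖ρ p.1 p.2‖ : ℂ))^2) := by
  ext ⟨p1, p2⟩ ⟨q1, q2⟩
  simp only [Matrix.mul_apply, Matrix.conjTranspose_apply, ptA, maxCorr, Matrix.of_apply]
  rw [Finset.sum_eq_single ((p2, p1) : Fin D × Fin D)]
  · by_cases h : q1 = p1 ∧ q2 = p2
    · obtain ⟨h1, h2⟩ := h
      subst h1; subst h2
      simp only [and_self, if_true, Matrix.diagonal_apply_eq]
      rw [Complex.star_def, mul_comm, Complex.mul_conj, Complex.normSq_eq_norm_sq]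
      push_cast; ring
    · have hne : ((p1, p2) : Fin D × Fin D) ≠ (q1, q2) := by
        simp only [ne_eq, Prod.mk.injEq, not_and]
        intro a b; exact h ⟨a.symm, b.symm⟩
      rw [Matrix.diagonal_apply_ne _ hne]
      have h2 : ¬(q1 = p1 ∧ p2 = q2) := fun ⟨a, b⟩ => h ⟨a, b.symm⟩
      simp [h2]
  · rintro ⟨r1, r2⟩ _ hr
    by_cases h1 : p1 = r2 ∧ r1 = p2
    · exact absurd (by simp [Prod.ext_iff, h1.1.symm, h1.2]) hr
    · simp [h1]
  · simp

/-- For a density matrix `ρ` on `ℂ^D`, the trace norm of the partial transpose of the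
associated maximally correlated state is `1 + Σ_{k≠l} |ρ_{k,l}|`, so its negativity
`(‖ρ̃^{T_A}‖₁ − 1)/2` equals `(Σ_{k≠l} |ρ_{k,l}|)/2`. -/
theorem traceNorm_ptA_maxCorr {D : ℕ} (ρ : Matrix (Fin D) (Fin D) ℂ)
    (hρ : ρ.PosSemidef) (hρtr : ρ.trace = 1) :
    traceNorm (ptA (maxCorr ρ)) =
        (∑ k, (ρ k k).re) + ∑ k, ∑ l, (if k = l then 0 else ‖ρ k l‖) ∧
    traceNorm (ptA (maxCorr ρ)) =
        1 + ∑ k, ∑ l, (if k = l then 0 else ‖ρ k l‖) ∧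
    (traceNorm (ptA (maxCorr ρ)) - 1) / 2 =
        (∑ k, ∑ l, (if k = l then 0 else ‖ρ k l‖)) / 2 := by
  set B : Matrix (Fin D × Fin D) (Fin D × Fin D) ℂ :=
    Matrix.diagonal (fun p : Fin D × Fin D => ((‖ρ p.1 p.2‖ : ℂ))) with hB
  have hBpsd : B.PosSemidef := by
    refine Matrix.posSemidef_diagonal_iff.mpr fun p => ?_
    exact Complex.zero_le_real.mpr (norm_nonneg _)
  have hsq : B ^ 2 = (ptA (maxCorr ρ))ᴴ * (ptA (maxCorr ρ)) := by
    rw [key, hB, pow_two, Matrix.diagonal_mul_diagonal]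
    ext p
    ring
  have hsqrt : ((Matrix.posSemidef_conjTranspose_mul_self (ptA (maxCorr ρ))).1.eigenvectorUnitary :
        Matrix _ _ ℂ) *
      diagonal (((↑) : ℝ → ℂ) ∘ (√·) ∘
        (Matrix.posSemidef_conjTranspose_mul_self (ptA (maxCorr ρ))).1.eigenvalues) *
      (star ((Matrix.posSemidef_conjTranspose_mul_self (ptA (maxCorr ρ))).1.eigenvectorUnitary :
        Matrix _ _ ℂ)) = B :=
    sqrt_eq_of_sq_eq' _ B hBpsd hsq
  have hdiag : ∀ k, (ρ k k).re = ‖ρ k k‖ := by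
    intro k
    have h0 : 0 ≤ ρ k k := by
      exact hρ.diag_nonneg
    rw [Complex.nonneg_iff] at h0
    rw [Complex.norm_def, Complex.normSq_apply, ← h0.2]
    simp [Real.sqrt_mul_self h0.1]
  have htr : traceNorm (ptA (maxCorr ρ)) = ∑ k, ∑ l, ‖ρ k l‖ := by
    rw [traceNorm, hsqrt, hB, Matrix.trace_diagonal]
    rw [← Complex.ofReal_sum, Complex.ofReal_re]
    exact Fintype.sum_prod_type _
  have hsplit : (∑ k, ∑ l, ‖ρ k l‖) =
      (∑ k, (ρ k k).re) + ∑ k, ∑ l, (if k = l then 0 else ‖ρ k l‖) := by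
    rw [← Finset.sum_add_distrib]
    refine Finset.sum_congr rfl fun k _ => ?_
    have h1 : ∀ l, ‖ρ k l‖ =
        (if k = l then ‖ρ k k‖ else 0) +
        (if k = l then 0 else ‖ρ k l‖) := by
      intro l; by_cases h : k = l <;> simp [h]
    rw [Finset.sum_congr rfl (fun l _ => h1 l), Finset.sum_add_distrib, Finset.sum_ite_eq,
      hdiag k]
    simp
  have hre : (∑ k, (ρ k k).re) = 1 := by
    have h1 : (ρ.trace).re = 1 := by rw [hρtr]; simp
    rw [← h1, Matrix.trace]
    exact (Complex.re_sum _ _).symm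
  refine ⟨by rw [htr, hsplit], ?_, ?_⟩
  · rw [htr, hsplit, hre]
  · rw [htr, hsplit, hre]; ring
end
end

section
/- Let |ψ⟩ = d^{−1/2} Σ_{j=0}^{d−1} |j⟩|j⟩ be the maximally entangled state on ℂ^d ⊗ ℂ^d and ρ = |ψ⟩⟨ψ|. Then the relative entropy of quantumness of ρ equals log₂ d; in particular, for every pair of unitaries U, V on ℂ^d, the Shannon entropy of the diagonal of (U⊗V) ρ (U⊗V)† is at least log₂ d, with equality achieved (e.g., for U = V = 𝟙). -/
open Matrix Kronecker BigOperators
open scoped ComplexOrder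

noncomputable section

/-- Shannon entropy (base 2) of a finitely supported vector of reals,
with the convention `0 · log₂ 0 = 0`. -/
def shannonEntropy {ι : Type*} [Fintype ι] (q : ι → ℝ) : ℝ :=
  ∑ i, -(q i) * Real.logb 2 (q i)

/-- Von Neumann entropy (base 2): the Shannon entropy of the vector of eigenvalues of
a Hermitian matrix (junk value `0` on non-Hermitian matrices). -/
def vNEntropy {ι : Type*} [Fintype ι] [DecidableEq ι] (M : Matrix ι ι ℂ) : ℝ :=
  if h : M.IsHermitian then shannonEntropy h.eigenvalues else 0

/-- The set of values `H(diag((U⊗V) ρ (U⊗V)†)) − S(ρ)` over product unitaries `U ⊗ V`;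
the relative entropy of quantumness `Q(ρ)` is its minimum (infimum). -/
def reqSet {d : ℕ} (ρ : Matrix (Fin d × Fin d) (Fin d × Fin d) ℂ) : Set ℝ :=
  {x : ℝ | ∃ U ∈ Matrix.unitaryGroup (Fin d) ℂ, ∃ V ∈ Matrix.unitaryGroup (Fin d) ℂ,
    x = shannonEntropy (fun q => (((U ⊗ₖ V) * ρ * (U ⊗ₖ V)ᴴ) q q).re) - vNEntropy ρ}

/-- The relative entropy of quantumness of a bipartite state. -/
def REQ {d : ℕ} (ρ : Matrix (Fin d × Fin d) (Fin d × Fin d) ℂ) : ℝ :=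
  sInf (reqSet ρ)

/-- The maximally entangled state vector `|ψ⟩ = d^{−1/2} Σ_j |j⟩|j⟩` on `ℂ^d ⊗ ℂ^d`. -/
def maxEnt (d : ℕ) : Fin d × Fin d → ℂ :=
  fun jk => if jk.1 = jk.2 then (1 / Real.sqrt d : ℝ) else 0

section Aux

variable {ι : Type*} [Fintype ι]

private lemma aux_conj (M : Matrix ι ι ℂ) (x : ι → ℂ) :
    M * vecMulVec x (star x) * Mᴴ = vecMulVec (M *ᵥ x) (star (M *ᵥ x)) := by
  ext i j
  simp only [mul_apply, vecMulVec_apply, mulVec, dotProduct, conjTranspose_apply,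
    Pi.star_apply, star_sum, star_mul', Finset.sum_mul, Finset.mul_sum]
  apply Finset.sum_congr rfl; intro k _; apply Finset.sum_congr rfl; intro l _; ring

private lemma aux_dot [DecidableEq ι] (M : Matrix ι ι ℂ) (hM : M ∈ Matrix.unitaryGroup ι ℂ)
    (x : ι → ℂ) : star (M *ᵥ x) ⬝ᵥ (M *ᵥ x) = star x ⬝ᵥ x := by
  have h1 : Mᴴ * M = 1 := by
    simpa [Matrix.star_eq_conjTranspose] using Matrix.mem_unitaryGroup_iff'.mp hM
  rw [star_mulVec, dotProduct_mulVec, vecMul_vecMul, h1, vecMul_one]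

private lemma aux_re (z : ℂ) : (z * star z).re = ‖z‖ ^ 2 := by
  simp [Complex.mul_conj, Complex.normSq_eq_norm_sq, ← Complex.ofReal_pow]

private lemma aux_cs (f g : ι → ℂ) :
    ‖∑ i, f i * g i‖ ^ 2 ≤ (∑ i, ‖f i‖ ^ 2) * (∑ i, ‖g i‖ ^ 2) := by
  calc ‖∑ i, f i * g i‖ ^ 2 ≤ (∑ i, ‖f i‖ * ‖g i‖) ^ 2 := by
        have h1 : ‖∑ i, f i * g i‖ ≤ ∑ i, ‖f i‖ * ‖g i‖ :=
          (norm_sum_le _ _).trans (le_of_eq (by simp [norm_mul]))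
        have h2 : (0:ℝ) ≤ ‖∑ i, f i * g i‖ := norm_nonneg _
        nlinarith
    _ ≤ (∑ i, ‖f i‖ ^ 2) * (∑ i, ‖g i‖ ^ 2) := Finset.sum_mul_sq_le_sq_mul_sq _ _ _

private lemma aux_row {d : ℕ} (U : Matrix (Fin d) (Fin d) ℂ)
    (hU : U ∈ Matrix.unitaryGroup (Fin d) ℂ) (a : Fin d) :
    ∑ j, ‖U a j‖ ^ 2 = 1 := by
  have h1 : U * Uᴴ = 1 := by
    simpa [Matrix.star_eq_conjTranspose] using Matrix.mem_unitaryGroup_iff.mp hU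
  have h2 := congrArg (fun M => (M a a).re) h1
  simp only [mul_apply, conjTranspose_apply, one_apply_eq, Complex.one_re] at h2
  rw [← h2, Complex.re_sum]
  exact Finset.sum_congr rfl fun j _ => (aux_re (U a j)).symm

private lemma aux_eig {ι : Type*} [Fintype ι] [DecidableEq ι] (ρ : Matrix ι ι ℂ)
    (h : ρ.IsHermitian) (h2 : ρ * ρ = ρ) (i : ι) :
    h.eigenvalues i = 0 ∨ h.eigenvalues i = 1 := by
  set U : Matrix ι ι ℂ := (Matrix.IsHermitian.eigenvectorUnitary h : Matrix ι ι ℂ) with hU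
  set D : Matrix ι ι ℂ := diagonal (RCLike.ofReal ∘ h.eigenvalues) with hDdef
  have hUU : U * star U = 1 := Unitary.coe_mul_star_self _
  have hsp : star U * ρ * U = D := by
    have := h.conjStarAlgAut_star_eigenvectorUnitary
    rwa [Unitary.conjStarAlgAut_star_apply] at this
  have hD : D * D = D := by
    rw [← hsp]
    calc star U * ρ * U * (star U * ρ * U) = star U * (ρ * (U * star U) * ρ) * U := by
          simp only [mul_assoc]
      _ = star U * ρ * U := by rw [hUU, mul_one, h2, mul_assoc]
  have hieq := congrArg (fun M => M i i) hD
  simp only [hDdef, diagonal_mul_diagonal, diagonal_apply_eq, Function.comp_apply] at hieq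
  have h4 : h.eigenvalues i * h.eigenvalues i = h.eigenvalues i := by exact_mod_cast hieq
  have h5 := mul_eq_zero.mp (by nlinarith : h.eigenvalues i * (h.eigenvalues i - 1) = 0)
  rcases h5 with h5 | h5
  · exact Or.inl h5
  · exact Or.inr (by linarith)

private lemma aux_shannon_ge {ι : Type*} [Fintype ι] {p : ι → ℝ} {d : ℕ} (hd : 1 ≤ d)
    (hnn : ∀ i, 0 ≤ p i) (hle : ∀ i, p i ≤ 1 / d) (hsum : ∑ i, p i = 1) :
    Real.logb 2 d ≤ shannonEntropy p := by
  have hd0 : (0:ℝ) < d := by exact_mod_cast hd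
  have key : ∀ i, p i * Real.logb 2 d ≤ -(p i) * Real.logb 2 (p i) := by
    intro i
    rcases eq_or_lt_of_le (hnn i) with h0 | h0
    · simp [← h0]
    · have h1 : Real.logb 2 (p i) ≤ Real.logb 2 (1 / d) :=
        Real.logb_le_logb_of_le one_lt_two h0 (hle i)
      have h2 : Real.logb 2 ((d:ℝ)⁻¹) = -Real.logb 2 d := Real.logb_inv _ _
      rw [one_div, h2] at h1
      have h3 : Real.logb 2 (d:ℝ) ≤ -Real.logb 2 (p i) := by linarith
      calc p i * Real.logb 2 d ≤ p i * (-Real.logb 2 (p i)) :=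
            mul_le_mul_of_nonneg_left h3 (hnn i)
        _ = -(p i) * Real.logb 2 (p i) := by ring
  calc Real.logb 2 d = (∑ i, p i) * Real.logb 2 d := by rw [hsum, one_mul]
    _ = ∑ i, p i * Real.logb 2 d := Finset.sum_mul _ _ _
    _ ≤ ∑ i, -(p i) * Real.logb 2 (p i) := Finset.sum_le_sum fun i _ => key i
    _ = shannonEntropy p := rfl

end Aux

section MaxEnt

variable {d : ℕ}

private lemma maxEnt_sq (hd : 1 ≤ d) :
    ((1 / Real.sqrt d : ℝ) : ℂ) * star ((1 / Real.sqrt d : ℝ) : ℂ) = ((1 / d : ℝ) : ℂ) := by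
  have hd0 : (0:ℝ) < d := by exact_mod_cast hd
  have hs : Real.sqrt d ≠ 0 := ne_of_gt (Real.sqrt_pos.mpr hd0)
  rw [Complex.star_def, Complex.conj_ofReal, ← Complex.ofReal_mul]
  congr 1
  rw [div_mul_div_comm, one_mul, Real.mul_self_sqrt hd0.le]

private lemma maxEnt_diag (hd : 1 ≤ d) (q : Fin d × Fin d) :
    (vecMulVec (maxEnt d) (star (maxEnt d))) q q = if q.1 = q.2 then ((1 / d : ℝ) : ℂ) else 0 := by
  rw [vecMulVec_apply, Pi.star_apply]
  by_cases h : q.1 = q.2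
  · simp only [maxEnt, h, if_pos]
    exact maxEnt_sq hd
  · simp [maxEnt, h]

private lemma maxEnt_dot (hd : 1 ≤ d) : star (maxEnt d) ⬝ᵥ maxEnt d = 1 := by
  have hd0 : (0:ℝ) < d := by exact_mod_cast hd
  have : ∀ q : Fin d × Fin d, star (maxEnt d q) * maxEnt d q
      = if q.1 = q.2 then ((1 / d : ℝ) : ℂ) else 0 := by
    intro q
    by_cases h : q.1 = q.2
    · simp only [maxEnt, h, if_pos]
      rw [mul_comm]; exact maxEnt_sq hd
    · simp [maxEnt, h]
  rw [dotProduct]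
  simp only [Pi.star_apply]
  rw [Finset.sum_congr rfl fun q _ => this q, Fintype.sum_prod_type]
  simp only [Finset.sum_ite_eq, Finset.mem_univ, if_pos]
  rw [Finset.sum_const, Finset.card_univ, Fintype.card_fin, nsmul_eq_mul]
  push_cast
  field_simp

private lemma maxEnt_mulVec (hd : 1 ≤ d) (U V : Matrix (Fin d) (Fin d) ℂ) (a b : Fin d) :
    ((U ⊗ₖ V) *ᵥ maxEnt d) (a, b) = ((1 / Real.sqrt d : ℝ) : ℂ) * ∑ j, U a j * V b j := by
  rw [mulVec, dotProduct, Fintype.sum_prod_type]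
  simp only [kroneckerMap_apply, maxEnt, mul_ite, mul_zero, Finset.sum_ite_eq, Finset.mem_univ,
    if_pos]
  rw [Finset.mul_sum]
  exact Finset.sum_congr rfl fun j _ => by ring

private lemma maxEnt_bound (hd : 1 ≤ d) {U V : Matrix (Fin d) (Fin d) ℂ}
    (hU : U ∈ Matrix.unitaryGroup (Fin d) ℂ) (hV : V ∈ Matrix.unitaryGroup (Fin d) ℂ)
    (q : Fin d × Fin d) : ‖((U ⊗ₖ V) *ᵥ maxEnt d) q‖ ^ 2 ≤ 1 / d := by
  obtain ⟨a, b⟩ := q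
  have hd0 : (0:ℝ) < d := by exact_mod_cast hd
  rw [maxEnt_mulVec hd U V a b, norm_mul, mul_pow]
  have h1 : ‖((1 / Real.sqrt d : ℝ) : ℂ)‖ ^ 2 = 1 / d := by
    rw [Complex.norm_real, Real.norm_eq_abs, abs_of_nonneg (by positivity), div_pow, one_pow,
      Real.sq_sqrt hd0.le]
  rw [h1]
  have h2 : ‖∑ j, U a j * V b j‖ ^ 2 ≤ 1 := by
    calc ‖∑ j, U a j * V b j‖ ^ 2 ≤ (∑ j, ‖U a j‖ ^ 2) * (∑ j, ‖V b j‖ ^ 2) := aux_cs _ _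
      _ = 1 := by rw [aux_row U hU a, aux_row V hV b, one_mul]
  calc (1 / (d:ℝ)) * ‖∑ j, U a j * V b j‖ ^ 2 ≤ (1 / (d:ℝ)) * 1 := by
        apply mul_le_mul_of_nonneg_left h2 (by positivity)
    _ = 1 / d := mul_one _

private lemma kron_unitary {U V : Matrix (Fin d) (Fin d) ℂ}
    (hU : U ∈ Matrix.unitaryGroup (Fin d) ℂ) (hV : V ∈ Matrix.unitaryGroup (Fin d) ℂ) :
    U ⊗ₖ V ∈ Matrix.unitaryGroup (Fin d × Fin d) ℂ := by
  rw [Matrix.mem_unitaryGroup_iff]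
  have hct : star (U ⊗ₖ V) = Uᴴ ⊗ₖ Vᴴ := by
    ext ⟨i, j⟩ ⟨k, l⟩
    simp [Matrix.star_eq_conjTranspose, conjTranspose_apply, kroneckerMap_apply, star_mul',
      mul_comm]
  rw [hct, ← Matrix.mul_kronecker_mul]
  have h1 : U * Uᴴ = 1 := by
    simpa [Matrix.star_eq_conjTranspose] using Matrix.mem_unitaryGroup_iff.mp hU
  have h2 : V * Vᴴ = 1 := by
    simpa [Matrix.star_eq_conjTranspose] using Matrix.mem_unitaryGroup_iff.mp hV
  rw [h1, h2, Matrix.one_kronecker_one]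

private lemma vN_maxEnt (hd : 1 ≤ d) : vNEntropy (vecMulVec (maxEnt d) (star (maxEnt d))) = 0 := by
  set ρ := vecMulVec (maxEnt d) (star (maxEnt d)) with hρ
  have hHerm : ρ.IsHermitian := by
    ext i j
    simp only [hρ, conjTranspose_apply, vecMulVec_apply, Pi.star_apply, star_mul', star_star]
    ring
  have hsq : ρ * ρ = ρ := by
    ext i j
    simp only [hρ, mul_apply, vecMulVec_apply, Pi.star_apply]
    calc ∑ k, maxEnt d i * star (maxEnt d k) * (maxEnt d k * star (maxEnt d j))
        = (maxEnt d i * star (maxEnt d j)) * (star (maxEnt d) ⬝ᵥ maxEnt d) := by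
          rw [dotProduct, Finset.mul_sum]
          exact Finset.sum_congr rfl fun k _ => by simp only [Pi.star_apply]; ring
      _ = maxEnt d i * star (maxEnt d j) := by rw [maxEnt_dot hd, mul_one]
  rw [vNEntropy, dif_pos hHerm, shannonEntropy]
  apply Finset.sum_eq_zero
  intro i _
  rcases aux_eig ρ hHerm hsq i with h | h <;> simp [h]

private lemma shannon_maxEnt (hd : 1 ≤ d) :
    shannonEntropy (fun q => ((vecMulVec (maxEnt d) (star (maxEnt d))) q q).re)
      = Real.logb 2 d := by
  have hd0 : (0:ℝ) < d := by exact_mod_cast hd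
  have hterm : ∀ q : Fin d × Fin d,
      -(((vecMulVec (maxEnt d) (star (maxEnt d))) q q).re)
        * Real.logb 2 (((vecMulVec (maxEnt d) (star (maxEnt d))) q q).re)
      = if q.1 = q.2 then (1 / d : ℝ) * Real.logb 2 d else 0 := by
    intro q
    rw [maxEnt_diag hd q]
    by_cases h : q.1 = q.2
    · simp only [h, if_pos, Complex.ofReal_re]
      rw [one_div, Real.logb_inv]
      ring
    · simp [h]
  rw [shannonEntropy, Finset.sum_congr rfl fun q _ => hterm q, Fintype.sum_prod_type]
  simp only [Finset.sum_ite_eq, Finset.mem_univ, if_pos]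
  rw [Finset.sum_const, Finset.card_univ, Fintype.card_fin, nsmul_eq_mul]
  field_simp

end MaxEnt

/-- For the maximally entangled state `ρ = |ψ⟩⟨ψ|`, the relative entropy of quantumness
equals `log₂ d`: every product-basis diagonal of `(U⊗V) ρ (U⊗V)†` has Shannon entropy at
least `log₂ d`, with equality attained at `U = V = 𝟙`. -/
theorem REQ_maxEnt {d : ℕ} (hd : 1 ≤ d) :
    REQ (vecMulVec (maxEnt d) (star (maxEnt d))) = Real.logb 2 d ∧
    (∀ U ∈ Matrix.unitaryGroup (Fin d) ℂ, ∀ V ∈ Matrix.unitaryGroup (Fin d) ℂ,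
      Real.logb 2 d ≤
        shannonEntropy (fun q =>
          (((U ⊗ₖ V) * vecMulVec (maxEnt d) (star (maxEnt d)) * (U ⊗ₖ V)ᴴ) q q).re)) ∧
    shannonEntropy (fun q => ((vecMulVec (maxEnt d) (star (maxEnt d))) q q).re) =
      Real.logb 2 d := by
  set ρ := vecMulVec (maxEnt d) (star (maxEnt d)) with hρ
  have hvN : vNEntropy ρ = 0 := vN_maxEnt hd
  have hbound : ∀ U ∈ Matrix.unitaryGroup (Fin d) ℂ, ∀ V ∈ Matrix.unitaryGroup (Fin d) ℂ,
      Real.logb 2 d ≤ shannonEntropy (fun q => (((U ⊗ₖ V) * ρ * (U ⊗ₖ V)ᴴ) q q).re) := by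
    intro U hU V hV
    set φ := (U ⊗ₖ V) *ᵥ maxEnt d with hφ
    have hdiag : ∀ q, (((U ⊗ₖ V) * ρ * (U ⊗ₖ V)ᴴ) q q).re = ‖φ q‖ ^ 2 := by
      intro q
      rw [hρ, aux_conj, vecMulVec_apply, Pi.star_apply, aux_re]
    apply aux_shannon_ge hd
    · intro q; rw [hdiag]; positivity
    · intro q; rw [hdiag]; exact maxEnt_bound hd hU hV q
    · rw [Finset.sum_congr rfl fun q _ => hdiag q]
      have h1 : star φ ⬝ᵥ φ = 1 := by
        rw [hφ, aux_dot _ (kron_unitary hU hV), maxEnt_dot hd]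
      have h2 : (star φ ⬝ᵥ φ).re = 1 := by rw [h1]; rfl
      rw [← h2, dotProduct, Complex.re_sum]
      refine Finset.sum_congr rfl fun q _ => ?_
      rw [Pi.star_apply, mul_comm, aux_re]
  have hone : (1 : Matrix (Fin d) (Fin d) ℂ) ∈ Matrix.unitaryGroup (Fin d) ℂ := one_mem _
  have hmem : Real.logb 2 d ∈ reqSet ρ := by
    refine ⟨1, hone, 1, hone, ?_⟩
    simp only [Matrix.one_kronecker_one, one_mul, conjTranspose_one, mul_one, hvN, sub_zero]
    exact (shannon_maxEnt hd).symm
  have hlb : ∀ x ∈ reqSet ρ, Real.logb 2 d ≤ x := by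
    rintro x ⟨U, hU, V, hV, rfl⟩
    rw [hvN, sub_zero]
    exact hbound U hU V hV
  exact ⟨le_antisymm (csInf_le ⟨_, hlb⟩ hmem) (le_csInf ⟨_, hmem⟩ hlb), hbound,
    shannon_maxEnt hd⟩
end
end

section
/- There exists a constant c′ > 0 such that for every d ≥ 1 and every δ with 0 < δ ≤ 1, the unitary group U(d) of d × d complex unitary matrices, equipped with the operator-norm distance, admits a δ-net of cardinality at most (c′ · d^{3/2} / δ)^{2d²}; that is, there exists a finite set F ⊆ U(d) with |F| ≤ (c′ · d^{3/2} / δ)^{2d²} such that for every U ∈ U(d) there is V ∈ F with ‖U − V‖ ≤ δ. -/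
open Matrix BigOperators

noncomputable section

/-- The `ℓ²→ℓ²` operator norm (largest singular value) of a square complex matrix. -/
def opNorm {m : Type*} [Fintype m] [DecidableEq m] (M : Matrix m m ℂ) : ℝ :=
  ‖(Matrix.toEuclideanCLM (𝕜 := ℂ) M : EuclideanSpace ℂ m →L[ℂ] EuclideanSpace ℂ m)‖

theorem opNorm_le_frobenius {d : ℕ} (M : Matrix (Fin d) (Fin d) ℂ) :
    opNorm M ≤ Real.sqrt (∑ i, ∑ j, ‖M i j‖ ^ 2) := by
  apply ContinuousLinearMap.opNorm_le_bound _ (Real.sqrt_nonneg _)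
  intro x
  have key : ∀ i : Fin d, ‖(Matrix.toEuclideanCLM (𝕜 := ℂ) M x) i‖ ≤
      Real.sqrt (∑ j, ‖M i j‖ ^ 2) * ‖x‖ := by
    intro i
    have hrfl : (Matrix.toEuclideanCLM (𝕜 := ℂ) M x) i = ∑ j, M i j * x j := rfl
    set v : EuclideanSpace ℂ (Fin d) := WithLp.toLp 2 (fun j => star (M i j)) with hv
    have hinner : (inner ℂ v x : ℂ) = ∑ j, M i j * x j := by
      simp [PiLp.inner_apply, hv, RCLike.inner_apply, mul_comm]
    have hnv : ‖v‖ = Real.sqrt (∑ j, ‖M i j‖ ^ 2) := by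
      rw [EuclideanSpace.norm_eq]
      congr 1
      refine Finset.sum_congr rfl fun j _ => ?_
      simp [hv]
    calc ‖(Matrix.toEuclideanCLM (𝕜 := ℂ) M x) i‖ = ‖(inner ℂ v x : ℂ)‖ := by
          rw [hrfl, hinner]
      _ ≤ ‖v‖ * ‖x‖ := norm_inner_le_norm v x
      _ = Real.sqrt (∑ j, ‖M i j‖ ^ 2) * ‖x‖ := by rw [hnv]
  rw [EuclideanSpace.norm_eq]
  rw [show Real.sqrt (∑ i, ∑ j, ‖M i j‖ ^ 2) * ‖x‖
      = Real.sqrt ((∑ i, ∑ j, ‖M i j‖ ^ 2) * ‖x‖ ^ 2) by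
    rw [Real.sqrt_mul (by positivity), Real.sqrt_sq (norm_nonneg x)]]
  apply Real.sqrt_le_sqrt
  calc ∑ i, ‖(Matrix.toEuclideanCLM (𝕜 := ℂ) M x) i‖ ^ 2
      ≤ ∑ i, (Real.sqrt (∑ j, ‖M i j‖ ^ 2) * ‖x‖) ^ 2 := by
        refine Finset.sum_le_sum fun i _ => ?_
        exact pow_le_pow_left₀ (norm_nonneg _) (key i) 2
    _ = (∑ i, ∑ j, ‖M i j‖ ^ 2) * ‖x‖ ^ 2 := by
        rw [Finset.sum_mul]
        refine Finset.sum_congr rfl fun i _ => ?_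
        rw [mul_pow, Real.sq_sqrt (by positivity)]

theorem opNorm_sub_comm {d : ℕ} (A B : Matrix (Fin d) (Fin d) ℂ) :
    opNorm (A - B) = opNorm (B - A) := by
  unfold opNorm
  rw [show A - B = -(B - A) by abel, map_neg, norm_neg]

theorem opNorm_triangle {d : ℕ} (A B C : Matrix (Fin d) (Fin d) ℂ) :
    opNorm (A - C) ≤ opNorm (A - B) + opNorm (B - C) := by
  unfold opNorm
  rw [show A - C = (A - B) + (B - C) by abel, map_add]
  exact norm_add_le _ _

/-- 1-D grid lemma: `[-1,1]` has an `α`-net of size at most `1/α + 5`. -/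
theorem grid1D (α : ℝ) (hα : 0 < α) :
    ∃ G : Finset ℝ, (G.card : ℝ) ≤ 1 / α + 5 ∧
      ∀ x : ℝ, |x| ≤ 1 → ∃ g ∈ G, |x - g| ≤ α := by
  set m : ℕ := ⌈1 / (2 * α)⌉₊ + 1 with hm
  refine ⟨(Finset.Icc (-(m : ℤ)) (m : ℤ)).image (fun k : ℤ => (k : ℝ) * (2 * α)), ?_, ?_⟩
  · have h1 := Finset.card_image_le (s := Finset.Icc (-(m : ℤ)) (m : ℤ))
      (f := fun k : ℤ => (k : ℝ) * (2 * α))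
    have h2 : (Finset.Icc (-(m : ℤ)) (m : ℤ)).card = 2 * m + 1 := by
      rw [Int.card_Icc]; omega
    have hceil : (⌈1 / (2 * α)⌉₊ : ℝ) ≤ 1 / (2 * α) + 1 :=
      (Nat.ceil_lt_add_one (by positivity)).le
    have hhalf : 2 * (1 / (2 * α)) = 1 / α := by field_simp
    have : ((2 * m + 1 : ℕ) : ℝ) ≤ 1 / α + 5 := by
      push_cast [hm]
      linarith
    calc ((Finset.Icc (-(m : ℤ)) (m : ℤ)).image (fun k : ℤ => (k : ℝ) * (2 * α))).card
        ≤ ((2 * m + 1 : ℕ) : ℝ) := by exact_mod_cast h2 ▸ h1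
      _ ≤ 1 / α + 5 := this
  · intro x hx
    set k : ℤ := round (x / (2 * α)) with hk
    have h2α : (0 : ℝ) < 2 * α := by linarith
    have hround := abs_sub_round (x / (2 * α))
    have hdist : |x - (k : ℝ) * (2 * α)| ≤ α := by
      have e0 : x - (k : ℝ) * (2 * α) = (x / (2 * α) - k) * (2 * α) := by
        field_simp
      rw [e0, abs_mul, abs_of_pos h2α]
      have := mul_le_mul_of_nonneg_right hround h2α.le
      linarith
    have hkmem : k ∈ Finset.Icc (-(m : ℤ)) (m : ℤ) := by
      rw [Finset.mem_Icc]
      have habs : |(k : ℝ)| ≤ (m : ℝ) := by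
        have h1 : |(k : ℝ)| ≤ |x / (2 * α)| + 1 / 2 := by
          have e : |(k : ℝ)| = |x / (2 * α) - (x / (2 * α) - k)| := by
            congr 1
            ring
          rw [e]
          have := abs_sub (x / (2 * α)) (x / (2 * α) - k)
          linarith
        have h2 : |x / (2 * α)| ≤ 1 / (2 * α) := by
          rw [abs_div, abs_of_pos h2α]
          gcongr
        have h3 : 1 / (2 * α) ≤ (⌈1 / (2 * α)⌉₊ : ℝ) := Nat.le_ceil _
        have h4 : (m : ℝ) = (⌈1 / (2 * α)⌉₊ : ℝ) + 1 := by push_cast [hm]; ring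
        linarith
      rw [abs_le] at habs
      exact ⟨by exact_mod_cast habs.1, by exact_mod_cast habs.2⟩
    exact ⟨(k : ℝ) * (2 * α), Finset.mem_image_of_mem _ hkmem, hdist⟩

/-- Complex grid lemma: the unit disc has a `2α`-net of size at most `(1/α+5)^2`. -/
theorem gridC (α : ℝ) (hα : 0 < α) :
    ∃ G : Finset ℂ, (G.card : ℝ) ≤ (1 / α + 5) ^ 2 ∧
      ∀ z : ℂ, ‖z‖ ≤ 1 → ∃ g ∈ G, ‖z - g‖ ≤ 2 * α := by
  obtain ⟨G₀, hG₀card, hG₀⟩ := grid1D α hα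
  refine ⟨(G₀ ×ˢ G₀).image (fun p => (p.1 : ℂ) + (p.2 : ℂ) * Complex.I), ?_, ?_⟩
  · calc (((G₀ ×ˢ G₀).image fun p : ℝ × ℝ => (p.1 : ℂ) + (p.2 : ℂ) * Complex.I).card : ℝ)
        ≤ ((G₀ ×ˢ G₀).card : ℝ) := by exact_mod_cast Finset.card_image_le
      _ = (G₀.card : ℝ) * (G₀.card : ℝ) := by rw [Finset.card_product]; push_cast; ring
      _ ≤ (1 / α + 5) ^ 2 := by
          rw [sq]
          have h0 : (0 : ℝ) ≤ (G₀.card : ℝ) := Nat.cast_nonneg _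
          exact mul_le_mul hG₀card hG₀card h0 (by positivity)
  · intro z hz
    have hre : |z.re| ≤ 1 := (Complex.abs_re_le_norm z).trans hz
    have him : |z.im| ≤ 1 := (Complex.abs_im_le_norm z).trans hz
    obtain ⟨a, haG, ha⟩ := hG₀ z.re hre
    obtain ⟨b, hbG, hb⟩ := hG₀ z.im him
    refine ⟨(a : ℂ) + (b : ℂ) * Complex.I,
      Finset.mem_image.mpr ⟨(a, b), Finset.mem_product.mpr ⟨haG, hbG⟩, rfl⟩, ?_⟩
    have hre' : (z - ((a : ℂ) + (b : ℂ) * Complex.I)).re = z.re - a := by simp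
    have him' : (z - ((a : ℂ) + (b : ℂ) * Complex.I)).im = z.im - b := by simp
    calc ‖z - ((a : ℂ) + (b : ℂ) * Complex.I)‖
        ≤ |(z - ((a : ℂ) + (b : ℂ) * Complex.I)).re| +
          |(z - ((a : ℂ) + (b : ℂ) * Complex.I)).im| := Complex.norm_le_abs_re_add_abs_im _
      _ = |z.re - a| + |z.im - b| := by rw [hre', him']
      _ ≤ α + α := add_le_add ha hb
      _ = 2 * α := by ring

/-- There is a universal constant `c′ > 0` such that for all `d ≥ 1` and `0 < δ ≤ 1`,
the unitary group `U(d)` (with operator-norm distance) admits a `δ`-net of cardinality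
at most `(c′ d^{3/2} / δ)^{2d²}`. -/
theorem unitaryGroup_net :
    ∃ c' : ℝ, 0 < c' ∧
      ∀ d : ℕ, 1 ≤ d → ∀ δ : ℝ, 0 < δ → δ ≤ 1 →
        ∃ F : Finset (Matrix (Fin d) (Fin d) ℂ),
          (∀ V ∈ F, V ∈ Matrix.unitaryGroup (Fin d) ℂ) ∧
          (F.card : ℝ) ≤ (c' * (d : ℝ) ^ ((3 : ℝ) / 2) / δ) ^ (2 * d ^ 2) ∧
          ∀ U ∈ Matrix.unitaryGroup (Fin d) ℂ, ∃ V ∈ F, opNorm (U - V) ≤ δ := by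
  refine ⟨9, by norm_num, fun d hd δ hδ hδ1 => ?_⟩
  classical
  have hd0 : (0 : ℝ) < d := by exact_mod_cast hd
  set α : ℝ := δ / (4 * d) with hα
  have hαpos : 0 < α := by positivity
  obtain ⟨G, hGcard, hG⟩ := gridC α hαpos
  -- finset of candidate matrices
  set N : Finset (Matrix (Fin d) (Fin d) ℂ) :=
    Fintype.piFinset (fun _ : Fin d => Fintype.piFinset (fun _ : Fin d => G)) with hN
  -- the rounding map to unitaries
  set pick : Matrix (Fin d) (Fin d) ℂ → Matrix (Fin d) (Fin d) ℂ := fun M =>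
    if h : ∃ V, V ∈ Matrix.unitaryGroup (Fin d) ℂ ∧ opNorm (M - V) ≤ δ / 2
    then h.choose else 1 with hpick
  refine ⟨N.image pick, ?_, ?_, ?_⟩
  · -- all elements are unitary
    intro V hV
    obtain ⟨M, _, hMV⟩ := Finset.mem_image.mp hV
    rw [← hMV, hpick]
    dsimp only
    split_ifs with h
    · exact h.choose_spec.1
    · exact one_mem (Matrix.unitaryGroup (Fin d) ℂ)
  · -- cardinality bound
    have hNcard : N.card = G.card ^ (d * d) := by
      rw [hN]; change (Fintype.piFinset (fun _ : Fin d => Fintype.piFinset (fun _ : Fin d => G)) : Finset (Fin d → Fin d → ℂ)).card = _; rw [Fintype.card_piFinset]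
      simp [Fintype.card_piFinset, Finset.prod_const, Finset.card_univ, pow_mul]
    have hbase : (G.card : ℝ) ≤ (9 * (d : ℝ) / δ) ^ 2 := by
      refine hGcard.trans ?_
      have h1 : 1 / α = 4 * (d : ℝ) / δ := by rw [hα]; field_simp; try ring
      have hdδ : (1 : ℝ) ≤ (d : ℝ) / δ := (one_le_div hδ).mpr (hδ1.trans (by exact_mod_cast hd))
      have h2 : 1 / α + 5 ≤ 9 * (d : ℝ) / δ := by
        rw [h1]
        have e1 : 4 * (d : ℝ) / δ = 4 * ((d : ℝ) / δ) := by ring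
        have e2 : 9 * (d : ℝ) / δ = 9 * ((d : ℝ) / δ) := by ring
        rw [e1, e2]; linarith
      exact pow_le_pow_left₀ (by positivity) h2 2
    have hbig : (9 * (d : ℝ) / δ) ≤ 9 * (d : ℝ) ^ ((3 : ℝ) / 2) / δ := by
      have : (d : ℝ) ≤ (d : ℝ) ^ ((3 : ℝ) / 2) := by
        nth_rewrite 1 [show (d : ℝ) = (d : ℝ) ^ (1 : ℝ) by rw [Real.rpow_one]]
        exact Real.rpow_le_rpow_of_exponent_le (by exact_mod_cast hd) (by norm_num)
      gcongr
    calc ((N.image pick).card : ℝ) ≤ (N.card : ℝ) := by exact_mod_cast Finset.card_image_le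
      _ = ((G.card : ℝ)) ^ (d * d) := by rw [hNcard]; push_cast; ring
      _ ≤ ((9 * (d : ℝ) / δ) ^ 2) ^ (d * d) :=
          pow_le_pow_left₀ (Nat.cast_nonneg _) hbase _
      _ = (9 * (d : ℝ) / δ) ^ (2 * d ^ 2) := by rw [← pow_mul]; ring_nf
      _ ≤ (9 * (d : ℝ) ^ ((3 : ℝ) / 2) / δ) ^ (2 * d ^ 2) :=
          pow_le_pow_left₀ (by positivity) hbig _
  · -- net property
    intro U hU
    have hentry : ∀ i j, ∃ g ∈ G, ‖U i j - g‖ ≤ 2 * α := fun i j =>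
      hG (U i j) (entry_norm_bound_of_unitary hU i j)
    choose g hg1 hg2 using hentry
    set M₀ : Matrix (Fin d) (Fin d) ℂ := Matrix.of g with hM₀
    have hgN : M₀ ∈ N :=
      Fintype.mem_piFinset.mpr fun i => Fintype.mem_piFinset.mpr fun j => hg1 i j
    have hUg : opNorm (U - M₀) ≤ δ / 2 := by
      refine (opNorm_le_frobenius _).trans ?_
      have hsum : (∑ i, ∑ j, ‖(U - M₀) i j‖ ^ 2) ≤ (d : ℝ) * ((d : ℝ) * (2 * α) ^ 2) := by
        calc (∑ i : Fin d, ∑ j : Fin d, ‖(U - M₀) i j‖ ^ 2)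
            ≤ ∑ i : Fin d, ∑ j : Fin d, (2 * α) ^ 2 := by
              refine Finset.sum_le_sum fun i _ => Finset.sum_le_sum fun j _ => ?_
              have h : ‖(U - M₀) i j‖ ≤ 2 * α := by
                simpa [Matrix.sub_apply, hM₀] using hg2 i j
              exact pow_le_pow_left₀ (norm_nonneg _) h 2
          _ = (d : ℝ) * ((d : ℝ) * (2 * α) ^ 2) := by
              simp [Finset.sum_const, Finset.card_univ]; try ring
      have h2α : 2 * α = δ / (2 * d) := by rw [hα]; field_simp; try ring
      calc Real.sqrt (∑ i, ∑ j, ‖(U - M₀) i j‖ ^ 2)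
          ≤ Real.sqrt ((d : ℝ) * ((d : ℝ) * (2 * α) ^ 2)) := Real.sqrt_le_sqrt hsum
        _ = Real.sqrt (((d : ℝ) * (2 * α)) ^ 2) := by congr 1; ring
        _ = (d : ℝ) * (2 * α) := Real.sqrt_sq (by positivity)
        _ = δ / 2 := by rw [h2α]; field_simp; try ring
    have hex : ∃ V, V ∈ Matrix.unitaryGroup (Fin d) ℂ ∧
        opNorm (M₀ - V) ≤ δ / 2 :=
      ⟨U, hU, by rw [opNorm_sub_comm]; exact hUg⟩
    refine ⟨pick M₀, Finset.mem_image_of_mem _ hgN, ?_⟩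
    have hpg : pick M₀ = hex.choose := by rw [hpick]; exact dif_pos hex
    rw [hpg]
    calc opNorm (U - hex.choose)
        ≤ opNorm (U - M₀) + opNorm (M₀ - hex.choose) :=
          opNorm_triangle _ _ _
      _ ≤ δ / 2 + δ / 2 := add_le_add hUg hex.choose_spec.2
      _ = δ := by ring
end
end

section
/- Let (b_i)_{i=1}^d be an orthonormal basis of ℂ^d, let (b'_i)_{i=1}^d be unit vectors with ‖b'_i − b_i‖₂ ≤ η for all i, and assume 2dη ≤ 1/2. Then the family (b'_i) is linearly independent, B = Σ_{i=1}^d |b'_i⟩⟨b'_i| is positive definite, and the orthonormalized vectors b''_i = B^{−1/2} b'_i satisfy ‖b''_i − b_i‖₂ ≤ (4d + 1)η for all i. -/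
open Matrix BigOperators
open scoped ComplexOrder

noncomputable section

/-- The Euclidean (`ℓ²`) norm of a vector in `ℂ^d`. -/
def l2norm {m : Type*} [Fintype m] (v : m → ℂ) : ℝ :=
  Real.sqrt (∑ k, ‖v k‖ ^ 2)

/-- `B = Σᵢ |b'ᵢ⟩⟨b'ᵢ|`. -/
def gram {d : ℕ} (b' : Fin d → Fin d → ℂ) : Matrix (Fin d) (Fin d) ℂ :=
  ∑ i, vecMulVec (b' i) (star (b' i))

-- `B^{−1/2}`: the inverse of the positive semidefinite square root of `B`
-- (junk value `1` on non-positive-semidefinite matrices).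
open Classical in
def invSqrt {m : Type*} [Fintype m] [DecidableEq m] (B : Matrix m m ℂ) : Matrix m m ℂ :=
  if h : B.PosSemidef then
    ((h.1.eigenvectorUnitary : Matrix m m ℂ) * diagonal ((↑) ∘ (Real.sqrt ·) ∘ h.1.eigenvalues) *
      (star h.1.eigenvectorUnitary : Matrix m m ℂ))⁻¹ else 1

namespace Helper
variable {m : Type*} [Fintype m]

lemma l2norm_nonneg (v : m → ℂ) : 0 ≤ l2norm v := Real.sqrt_nonneg _

lemma l2norm_sq (v : m → ℂ) : l2norm v ^ 2 = ∑ k, ‖v k‖ ^ 2 :=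
  Real.sq_sqrt (Finset.sum_nonneg fun _ _ => sq_nonneg _)

lemma star_dot_self (v : m → ℂ) : star v ⬝ᵥ v = ((l2norm v ^ 2 : ℝ) : ℂ) := by
  rw [l2norm_sq]
  push_cast
  simp only [dotProduct, Pi.star_apply]
  refine Finset.sum_congr rfl fun k _ => ?_
  rw [Complex.star_def, Complex.conj_mul']

lemma l2norm_eq (v : m → ℂ) : l2norm v = ‖(WithLp.equiv 2 (m → ℂ)).symm v‖ :=
  (EuclideanSpace.norm_eq _).symm

lemma l2norm_add_le (x y : m → ℂ) : l2norm (x + y) ≤ l2norm x + l2norm y := by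
  rw [l2norm_eq, l2norm_eq, l2norm_eq]
  exact norm_add_le _ _

lemma dot_le (u v : m → ℂ) : ‖star u ⬝ᵥ v‖ ≤ l2norm u * l2norm v := by
  rw [l2norm_eq, l2norm_eq, dotProduct_comm]
  exact norm_inner_le_norm (𝕜 := ℂ) ((WithLp.equiv 2 (m → ℂ)).symm u) ((WithLp.equiv 2 (m → ℂ)).symm v)

lemma l2norm_pos {v : m → ℂ} (hv : v ≠ 0) : 0 < l2norm v := by
  rcases (l2norm_nonneg v).lt_or_eq with h | h
  · exact h
  exact absurd (by
    ext k
    have h2 := l2norm_sq v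
    rw [← h] at h2
    have := (Finset.sum_eq_zero_iff_of_nonneg (fun i _ => sq_nonneg ‖v i‖)).mp (by linarith [h2]) k (Finset.mem_univ k)
    simpa using (pow_eq_zero_iff (two_ne_zero)).mp this) hv

lemma l2norm_eq_of_dot {u v : m → ℂ} (h : star u ⬝ᵥ u = star v ⬝ᵥ v) :
    l2norm u = l2norm v := by
  rw [star_dot_self, star_dot_self] at h
  have := Complex.ofReal_injective h
  have hu := l2norm_nonneg u
  have hv := l2norm_nonneg v
  nlinarith

lemma sum_mulVec {ι : Type*} (s : Finset ι) (A : ι → Matrix m m ℂ) (x : m → ℂ) :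
    (∑ i ∈ s, A i) *ᵥ x = ∑ i ∈ s, A i *ᵥ x := by
  ext j
  simp only [mulVec, dotProduct, Matrix.sum_apply, Finset.sum_apply, Finset.sum_mul]
  rw [Finset.sum_comm]

lemma dot_sum {ι : Type*} (s : Finset ι) (u : m → ℂ) (f : ι → (m → ℂ)) :
    u ⬝ᵥ (∑ i ∈ s, f i) = ∑ i ∈ s, u ⬝ᵥ f i := by
  simp only [dotProduct, Finset.sum_apply, Finset.mul_sum]
  rw [Finset.sum_comm]

lemma quad_form {d : ℕ} (b' : Fin d → Fin d → ℂ) (x : Fin d → ℂ) :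
    star x ⬝ᵥ (gram b' *ᵥ x) = ((∑ i, ‖star (b' i) ⬝ᵥ x‖ ^ 2 : ℝ) : ℂ) := by
  rw [_root_.gram, sum_mulVec, dot_sum]
  push_cast
  refine Finset.sum_congr rfl fun i _ => ?_
  have h1 : vecMulVec (b' i) (star (b' i)) *ᵥ x = (star (b' i) ⬝ᵥ x) • b' i := by
    ext j
    simp only [vecMulVec_apply, mulVec, dotProduct, Pi.smul_apply, smul_eq_mul, Finset.sum_mul, Finset.mul_sum]
    exact Finset.sum_congr rfl fun k _ => by ring
  rw [h1, dotProduct_smul]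
  have h2 : star x ⬝ᵥ b' i = star (star (b' i) ⬝ᵥ x) := by
    simp [dotProduct, Finset.sum_congr, mul_comm]
  rw [smul_eq_mul, h2, Complex.star_def, Complex.mul_conj']

lemma l2norm_mulVec_eq {d : ℕ} {V : Matrix (Fin d) (Fin d) ℂ} (hV : Vᴴ * V = 1)
    (y : Fin d → ℂ) : l2norm (V *ᵥ y) = l2norm y := by
  apply l2norm_eq_of_dot
  rw [star_mulVec, dotProduct_mulVec, vecMul_vecMul, hV, vecMul_one]

lemma l2norm_diag_le {d : ℕ} (g : Fin d → ℂ) (y : Fin d → ℂ) {c : ℝ} (hc : 0 ≤ c)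
    (hg : ∀ k, ‖g k‖ ≤ c) : l2norm (diagonal g *ᵥ y) ≤ c * l2norm y := by
  have h1 : ∀ k, (diagonal g *ᵥ y) k = g k * y k := by
    intro k; simp [mulVec_diagonal]
  have h2 : l2norm (diagonal g *ᵥ y) ^ 2 ≤ c ^ 2 * l2norm y ^ 2 := by
    rw [l2norm_sq, l2norm_sq, Finset.mul_sum]
    refine Finset.sum_le_sum fun k _ => ?_
    rw [h1, norm_mul, mul_pow]
    exact mul_le_mul_of_nonneg_right (by nlinarith [norm_nonneg (g k), hg k]) (sq_nonneg _)
  have h3 := l2norm_nonneg (diagonal g *ᵥ y)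
  calc l2norm (diagonal g *ᵥ y) = Real.sqrt (l2norm (diagonal g *ᵥ y) ^ 2) := (Real.sqrt_sq h3).symm
    _ ≤ Real.sqrt (c ^ 2 * l2norm y ^ 2) := Real.sqrt_le_sqrt h2
    _ = c * l2norm y := by
        rw [Real.sqrt_mul (sq_nonneg c), Real.sqrt_sq hc, Real.sqrt_sq (l2norm_nonneg y)]
end Helper

set_option maxHeartbeats 4000000 in
/-- If `(bᵢ)` is an orthonormal basis of `ℂ^d`, the `(b'ᵢ)` are unit vectors with
`‖b'ᵢ − bᵢ‖₂ ≤ η`, and `2dη ≤ 1/2`, then the `(b'ᵢ)` are linearly independent,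
`B = Σᵢ |b'ᵢ⟩⟨b'ᵢ|` is positive definite, and the orthonormalized vectors
`b''ᵢ = B^{−1/2} b'ᵢ` satisfy `‖b''ᵢ − bᵢ‖₂ ≤ (4d + 1)η`. -/
theorem orthonormalization_close {d : ℕ} (b b' : Fin d → Fin d → ℂ) (η : ℝ)
    (hb : ∀ i j, (∑ k, star (b i k) * b j k) = if i = j then (1 : ℂ) else 0)
    (hb' : ∀ i, l2norm (b' i) = 1)
    (hclose : ∀ i, l2norm (b' i - b i) ≤ η)
    (hsmall : 2 * d * η ≤ 1 / 2) :
    LinearIndependent ℂ b' ∧ (gram b').PosDef ∧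
    ∀ i, l2norm (invSqrt (gram b') *ᵥ b' i - b i) ≤ (4 * d + 1) * η := by
  classical
  rcases Nat.eq_zero_or_pos d with hd0 | hd0
  · subst hd0
    refine ⟨linearIndependent_empty_type, ⟨?_, ?_⟩, fun i => i.elim0⟩
    · ext i j; exact i.elim0
    · intro x hx; exact absurd (Finsupp.ext fun i => i.elim0) hx
  -- basic numeric facts
  have hη : 0 ≤ η := le_trans (Helper.l2norm_nonneg _) (hclose ⟨0, hd0⟩)
  have hd1 : (1 : ℝ) ≤ (d : ℝ) := by exact_mod_cast hd0
  have hdη : (d : ℝ) * η ≤ 1 / 4 := by nlinarith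
  have hηd : η ≤ (d : ℝ) * η := le_mul_of_one_le_left hη hd1
  have hdη0 : 0 ≤ (d : ℝ) * η := by positivity
  set ε : ℝ := 2 * (d : ℝ) * η + η / 4 with hεdef
  have hε0 : 0 ≤ ε := by positivity
  have hε58 : ε ≤ 5 / 8 := by simp only [hεdef]; nlinarith
  have hεd : ε ≤ 2 * ((d:ℝ) * η) + ((d:ℝ) * η) / 4 := by simp only [hεdef]; nlinarith
  -- norms of b i
  have hbnorm : ∀ i, l2norm (b i) = 1 := by
    intro i
    have h1 : star (b i) ⬝ᵥ (b i) = 1 := by simpa [dotProduct] using hb i i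
    rw [Helper.star_dot_self] at h1
    have h2 : l2norm (b i) ^ 2 = 1 := Complex.ofReal_eq_one.mp h1
    nlinarith [Helper.l2norm_nonneg (b i)]
  -- Parseval
  have parseval : ∀ x : Fin d → ℂ, ∑ i, ‖star (b i) ⬝ᵥ x‖ ^ 2 = l2norm x ^ 2 := by
    intro x
    set M : Matrix (Fin d) (Fin d) ℂ := Matrix.of fun i k => star (b i k) with hM
    have hMMH : M * Mᴴ = 1 := by
      ext i j
      simpa [hM, Matrix.mul_apply, Matrix.conjTranspose_apply, Matrix.one_apply] using hb i j
    have hMHM : Mᴴ * M = 1 := mul_eq_one_comm.mp hMMH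
    have h2 : ∀ i, (M *ᵥ x) i = star (b i) ⬝ᵥ x := fun i => rfl
    calc ∑ i, ‖star (b i) ⬝ᵥ x‖ ^ 2 = ∑ i, ‖(M *ᵥ x) i‖ ^ 2 := by
          exact Finset.sum_congr rfl fun i _ => by rw [h2]
      _ = l2norm (M *ᵥ x) ^ 2 := (Helper.l2norm_sq _).symm
      _ = l2norm x ^ 2 := by rw [Helper.l2norm_mulVec_eq hMHM]
  -- perturbation of the quadratic form
  have hQclose : ∀ x : Fin d → ℂ,
      |(∑ i, ‖star (b' i) ⬝ᵥ x‖ ^ 2) - l2norm x ^ 2| ≤ ε * l2norm x ^ 2 := by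
    intro x
    set L := l2norm x with hL
    have hL0 : 0 ≤ L := Helper.l2norm_nonneg x
    have hdiff : ∀ i, |‖star (b' i) ⬝ᵥ x‖ - ‖star (b i) ⬝ᵥ x‖| ≤ η * L := by
      intro i
      have h1 : star (b' i) ⬝ᵥ x - star (b i) ⬝ᵥ x = star (b' i - b i) ⬝ᵥ x := by
        rw [star_sub, sub_dotProduct]
      calc |‖star (b' i) ⬝ᵥ x‖ - ‖star (b i) ⬝ᵥ x‖|
          ≤ ‖star (b' i) ⬝ᵥ x - star (b i) ⬝ᵥ x‖ := abs_norm_sub_norm_le _ _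
        _ = ‖star (b' i - b i) ⬝ᵥ x‖ := by rw [h1]
        _ ≤ l2norm (b' i - b i) * L := Helper.dot_le _ _
        _ ≤ η * L := mul_le_mul_of_nonneg_right (hclose i) hL0
    have hci : ∀ i, ‖star (b i) ⬝ᵥ x‖ ≤ L := by
      intro i
      calc ‖star (b i) ⬝ᵥ x‖ ≤ l2norm (b i) * L := Helper.dot_le _ _
        _ = L := by rw [hbnorm i, one_mul]
    have hpt : ∀ i, |‖star (b' i) ⬝ᵥ x‖ ^ 2 - ‖star (b i) ⬝ᵥ x‖ ^ 2|
        ≤ η * L * (2 * ‖star (b i) ⬝ᵥ x‖ + η * L) := by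
      intro i
      have h2 := abs_le.mp (hdiff i)
      rw [abs_le]
      constructor <;>
        nlinarith [norm_nonneg (star (b' i) ⬝ᵥ x), norm_nonneg (star (b i) ⬝ᵥ x),
          mul_nonneg hη hL0]
    have hsum : (∑ i, ‖star (b i) ⬝ᵥ x‖) ≤ (d : ℝ) * L := by
      calc (∑ i, ‖star (b i) ⬝ᵥ x‖) ≤ ∑ _i : Fin d, L := Finset.sum_le_sum fun i _ => hci i
        _ = (d : ℝ) * L := by rw [Finset.sum_const, Finset.card_univ, Fintype.card_fin,
            nsmul_eq_mul]
    have hdη2 : (d : ℝ) * η ^ 2 ≤ η / 4 := by nlinarith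
    calc |(∑ i, ‖star (b' i) ⬝ᵥ x‖ ^ 2) - L ^ 2|
        = |∑ i, (‖star (b' i) ⬝ᵥ x‖ ^ 2 - ‖star (b i) ⬝ᵥ x‖ ^ 2)| := by
          rw [Finset.sum_sub_distrib, parseval x]
      _ ≤ ∑ i, |‖star (b' i) ⬝ᵥ x‖ ^ 2 - ‖star (b i) ⬝ᵥ x‖ ^ 2| :=
          Finset.abs_sum_le_sum_abs _ _
      _ ≤ ∑ i, η * L * (2 * ‖star (b i) ⬝ᵥ x‖ + η * L) := Finset.sum_le_sum fun i _ => hpt i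
      _ = η * L * (2 * (∑ i, ‖star (b i) ⬝ᵥ x‖) + (d : ℝ) * (η * L)) := by
          rw [← Finset.mul_sum, Finset.sum_add_distrib, Finset.sum_const, Finset.card_univ,
            Fintype.card_fin, nsmul_eq_mul, ← Finset.mul_sum]
      _ ≤ η * L * (2 * ((d : ℝ) * L) + (d : ℝ) * (η * L)) := by
          have h3 : 0 ≤ η * L := mul_nonneg hη hL0
          have h4 : 2 * (∑ i, ‖star (b i) ⬝ᵥ x‖) + (d : ℝ) * (η * L)
              ≤ 2 * ((d : ℝ) * L) + (d : ℝ) * (η * L) := by linarith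
          exact mul_le_mul_of_nonneg_left h4 h3
      _ ≤ ε * L ^ 2 := by simp only [hεdef]; nlinarith [sq_nonneg L, mul_nonneg hη hL0]
  clear_value ε
  clear hεdef
  -- Positive definiteness
  have hherm : (gram b').IsHermitian := by
    rw [Matrix.IsHermitian, _root_.gram, Matrix.conjTranspose_sum]
    refine Finset.sum_congr rfl fun i _ => ?_
    ext j k
    simp [Matrix.conjTranspose_apply, Matrix.vecMulVec_apply, mul_comm]
  have hQlb : ∀ x : Fin d → ℂ,
      (1 - ε) * l2norm x ^ 2 ≤ ∑ i, ‖star (b' i) ⬝ᵥ x‖ ^ 2 := by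
    intro x
    have h1 := abs_le.mp (hQclose x)
    nlinarith [sq_nonneg (l2norm x)]
  have hPD : (gram b').PosDef := by
    refine Matrix.PosDef.of_dotProduct_mulVec_pos hherm fun x hx => ?_
    rw [Helper.quad_form]
    rw [Complex.zero_lt_real]
    have hL := Helper.l2norm_pos hx
    nlinarith [hQlb x, hε58, mul_pos hL hL]
  -- Linear independence
  have hN : gram b' = (Matrix.of fun k i => b' i k) * (Matrix.of fun k i => b' i k)ᴴ := by
    ext j k
    simp [_root_.gram, Matrix.mul_apply, Matrix.sum_apply, Matrix.vecMulVec_apply,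
      Matrix.conjTranspose_apply]
  have hNunit : IsUnit (Matrix.of fun k i => b' i k) := by
    have h1 : IsUnit (gram b').det := (Matrix.isUnit_iff_isUnit_det _).mp hPD.isUnit
    rw [hN, Matrix.det_mul] at h1
    exact (Matrix.isUnit_iff_isUnit_det _).mpr (isUnit_of_mul_isUnit_left h1)
  have hli : LinearIndependent ℂ b' := by
    rw [Fintype.linearIndependent_iff]
    intro g hg
    have hinj := Matrix.mulVec_injective_iff_isUnit.mpr hNunit
    have h0 : (Matrix.of fun k i => b' i k) *ᵥ g = (Matrix.of fun k i => b' i k) *ᵥ 0 := by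
      rw [Matrix.mulVec_zero]
      ext k
      have h2 := congrFun hg k
      simpa [Matrix.mulVec, dotProduct, Finset.sum_apply, mul_comm] using h2
    intro i
    have := hinj h0
    simp [this]
  refine ⟨hli, hPD, ?_⟩
  -- spectral analysis
  have hPSD := hPD.posSemidef
  have hH := hPSD.1
  set U : Matrix (Fin d) (Fin d) ℂ := (Matrix.IsHermitian.eigenvectorUnitary hH : Matrix (Fin d) (Fin d) ℂ) with hUdef
  have hUU : U * star U = 1 :=
    Matrix.mem_unitaryGroup_iff.mp (Matrix.IsHermitian.eigenvectorUnitary hH).2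
  have hsUU : star U * U = 1 :=
    Matrix.mem_unitaryGroup_iff'.mp (Matrix.IsHermitian.eigenvectorUnitary hH).2
  set lam : Fin d → ℝ := hH.eigenvalues with hlamdef
  have heig : ∀ i, 1 - ε ≤ lam i ∧ lam i ≤ 1 + ε := by
    intro i
    have hv1 : l2norm (⇑(hH.eigenvectorBasis i)) = 1 := by
      have h1 := hH.eigenvectorBasis.orthonormal.1 i
      rwa [EuclideanSpace.norm_eq] at h1
    have heq : lam i = ∑ j, ‖star (b' j) ⬝ᵥ ⇑(hH.eigenvectorBasis i)‖ ^ 2 := by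
      rw [hlamdef, hH.eigenvalues_eq i, Helper.quad_form]
      exact Complex.ofReal_re _
    have h2 := abs_le.mp (hQclose (⇑(hH.eigenvectorBasis i)))
    rw [hv1] at h2
    rw [heq]
    constructor <;> [nlinarith [h2.1]; nlinarith [h2.2]]
  have hlam_pos : ∀ i, 0 < lam i := by
    intro i
    have := (heig i).1
    nlinarith
  -- scalar estimate
  have hscalar : ∀ k, |(Real.sqrt (lam k))⁻¹ - 1| ≤ 4 * (d:ℝ) * η := by
    intro k
    obtain ⟨h1, h2⟩ := heig k
    set s := Real.sqrt (lam k) with hs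
    have hs0 : 0 < s := Real.sqrt_pos.mpr (hlam_pos k)
    have hs2 : s ^ 2 = lam k := Real.sq_sqrt (hlam_pos k).le
    have hsinv : s * s⁻¹ = 1 := mul_inv_cancel₀ hs0.ne'
    have hshalf : 1 / 2 ≤ s := by nlinarith
    have hsi0 : 0 < s⁻¹ := inv_pos.mpr hs0
    rw [abs_le]
    constructor
    · nlinarith [mul_pos hs0 hsi0, mul_pos (mul_pos hs0 hs0) hsi0]
    · nlinarith [mul_pos hs0 hsi0, mul_pos (mul_pos hs0 hs0) hsi0]
  -- the inverse square root
  set Ds : Matrix (Fin d) (Fin d) ℂ :=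
    diagonal (fun i => ((Real.sqrt (lam i) : ℝ) : ℂ)) with hDsdef
  set Dinv : Matrix (Fin d) (Fin d) ℂ :=
    diagonal (fun i => (((Real.sqrt (lam i))⁻¹ : ℝ) : ℂ)) with hDinvdef
  have hDD : Ds * Dinv = 1 := by
    rw [hDsdef, hDinvdef, Matrix.diagonal_mul_diagonal]
    have h4 : (fun i => ((Real.sqrt (lam i) : ℝ) : ℂ) * (((Real.sqrt (lam i))⁻¹ : ℝ) : ℂ))
        = fun _ => (1 : ℂ) := by
      funext i
      rw [← Complex.ofReal_mul, mul_inv_cancel₀ (Real.sqrt_pos.mpr (hlam_pos i)).ne']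
      exact Complex.ofReal_one
    rw [h4, Matrix.diagonal_one]
  have hinv : (U * Ds * star U)⁻¹ = U * Dinv * star U := by
    apply Matrix.inv_eq_right_inv
    calc U * Ds * star U * (U * Dinv * star U)
        = U * (Ds * ((star U * U) * (Dinv * star U))) := by
          simp only [Matrix.mul_assoc]
      _ = U * (Ds * (Dinv * star U)) := by rw [hsUU, Matrix.one_mul]
      _ = U * ((Ds * Dinv) * star U) := by rw [Matrix.mul_assoc]
      _ = U * star U := by rw [hDD, Matrix.one_mul]
      _ = 1 := hUU
  have hinvSqrt : invSqrt (gram b') = U * Dinv * star U := by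
    rw [invSqrt, dif_pos hPSD]
    exact hinv
  -- difference matrix
  have hdiffmat : invSqrt (gram b') - 1 =
      U * diagonal (fun k => (((Real.sqrt (lam k))⁻¹ - 1 : ℝ) : ℂ)) * star U := by
    rw [hinvSqrt]
    have h1 : (1 : Matrix (Fin d) (Fin d) ℂ) = U * 1 * star U := by
      rw [Matrix.mul_one, hUU]
    calc U * Dinv * star U - 1 = U * Dinv * star U - U * 1 * star U := by rw [← h1]
      _ = U * (Dinv - 1) * star U := by rw [← Matrix.sub_mul, ← Matrix.mul_sub]
      _ = U * diagonal (fun k => (((Real.sqrt (lam k))⁻¹ - 1 : ℝ) : ℂ)) * star U := by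
          rw [hDinvdef, ← Matrix.diagonal_one, Matrix.diagonal_sub]
          push_cast
          rfl
  -- final bound
  intro i
  have hw1 : l2norm (b' i) = 1 := hb' i
  have hkey : l2norm ((invSqrt (gram b') - 1) *ᵥ b' i) ≤ 4 * (d:ℝ) * η := by
    rw [hdiffmat, ← Matrix.mulVec_mulVec, ← Matrix.mulVec_mulVec]
    have hUherm : Uᴴ * U = 1 := by rw [← Matrix.star_eq_conjTranspose]; exact hsUU
    rw [Helper.l2norm_mulVec_eq hUherm]
    have hsUherm : (star U)ᴴ * (star U) = 1 := by
      rw [← Matrix.star_eq_conjTranspose, star_star]; exact hUU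
    have h3 : l2norm (star U *ᵥ b' i) = 1 := by
      rw [Helper.l2norm_mulVec_eq hsUherm, hw1]
    calc l2norm (diagonal (fun k => (((Real.sqrt (lam k))⁻¹ - 1 : ℝ) : ℂ)) *ᵥ (star U *ᵥ b' i))
        ≤ (4 * (d:ℝ) * η) * l2norm (star U *ᵥ b' i) := by
          refine Helper.l2norm_diag_le _ _ (by positivity) ?_
          intro k
          rw [Complex.norm_real]
          exact (abs_le.mpr (abs_le.mp (hscalar k))).trans_eq rfl
      _ = 4 * (d:ℝ) * η := by rw [h3, mul_one]
  have htri : invSqrt (gram b') *ᵥ b' i - b i =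
      ((invSqrt (gram b') - 1) *ᵥ b' i) + (b' i - b i) := by
    rw [Matrix.sub_mulVec, Matrix.one_mulVec]
    abel
  rw [htri]
  calc l2norm (((invSqrt (gram b') - 1) *ᵥ b' i) + (b' i - b i))
      ≤ l2norm ((invSqrt (gram b') - 1) *ᵥ b' i) + l2norm (b' i - b i) :=
        Helper.l2norm_add_le _ _
    _ ≤ 4 * (d:ℝ) * η + η := add_le_add hkey (hclose i)
    _ = (4 * (d:ℝ) + 1) * η := by ring
end
end

section
/- Let D ≥ 1, let e₀ be a fixed unit vector in ℂ^D, and let μ be the Haar probability measure on the unitary group U(D). Then ∫_{U(D)} (U e₀)(U e₀)† ⊗ (U e₀)(U e₀)† dμ(U) = (𝟙 + F) / (D(D+1)), where F is the swap operator on ℂ^D ⊗ ℂ^D, defined on basis vectors by F(|i⟩⊗|j⟩) = |j⟩⊗|i⟩, and 𝟙 is the identity on ℂ^D ⊗ ℂ^D. In particular, for any D × D complex matrices X and Y, Tr(F (X ⊗ Y)) = Tr(XY). -/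
open Matrix Kronecker BigOperators MeasureTheory
open ComplexConjugate

noncomputable section

instance matrixMeasurableSpace {m n : Type*} : MeasurableSpace (Matrix m n ℂ) :=
  (inferInstance : MeasurableSpace (m → n → ℂ))

/-- The rank-one matrix `|w⟩⟨w| = w w†`. -/
def rankOne {m : Type*} (w : m → ℂ) : Matrix m m ℂ :=
  Matrix.vecMulVec w (star w)

/-- The swap operator `F` on `ℂ^D ⊗ ℂ^D`, with `F (|i⟩⊗|j⟩) = |j⟩⊗|i⟩`. -/
def swapOp (D : ℕ) : Matrix (Fin D × Fin D) (Fin D × Fin D) ℂ :=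
  Matrix.of fun p q => if p.1 = q.2 ∧ p.2 = q.1 then 1 else 0

variable {D : ℕ}

abbrev UG (D : ℕ) := ↥(Matrix.unitaryGroup (Fin D) ℂ)

lemma meas_entry (i j : Fin D) : Measurable fun U : UG D => (U : Matrix (Fin D) (Fin D) ℂ) i j :=
  (measurable_pi_apply j).comp ((measurable_pi_apply i).comp measurable_subtype_coe)

lemma meas_mul_left (g : UG D) : Measurable fun x : UG D => g * x := by
  have h : Measurable fun x : UG D => ((g : Matrix (Fin D) (Fin D) ℂ) * (x : Matrix (Fin D) (Fin D) ℂ)) := by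
    apply measurable_pi_lambda; intro i; apply measurable_pi_lambda; intro j
    simp only [Matrix.mul_apply]
    exact Finset.measurable_sum _ fun k _ => measurable_const.mul (meas_entry k j)
  exact h.subtype_mk

lemma intInv (μ : Measure (UG D)) (hμinv : ∀ g : UG D, μ.map (fun x => g * x) = μ)
    (g : UG D) (f : UG D → ℂ) (hf : Measurable f) :
    ∫ U, f (g * U) ∂μ = ∫ U, f U ∂μ := by
  conv_rhs => rw [← hμinv g]
  rw [integral_map (meas_mul_left g).aemeasurable]
  rw [hμinv g]
  exact hf.aestronglyMeasurable

/-- A 2×2 block acting on coordinates `i ≠ j`, identity elsewhere. -/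
def emb (i j : Fin D) (p q r s : ℂ) : Matrix (Fin D) (Fin D) ℂ :=
  Matrix.of fun x y =>
    if x = i then (if y = i then p else if y = j then q else 0)
    else if x = j then (if y = i then r else if y = j then s else 0)
    else if x = y then 1 else 0

lemma sum_split {i j : Fin D} (hij : i ≠ j) (f : Fin D → ℂ) :
    ∑ x, f x = f i + f j + ∑ x ∈ (Finset.univ \ {i, j}), f x := by
  have h : (Finset.univ : Finset (Fin D)) = insert i (insert j (Finset.univ \ {i, j})) := by
    ext x
    simp only [Finset.mem_univ, Finset.mem_insert, Finset.mem_sdiff, true_iff, true_and,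
      Finset.mem_singleton]
    by_cases h1 : x = i <;> by_cases h2 : x = j <;> simp [h1, h2]
  conv_lhs => rw [h]
  rw [Finset.sum_insert (by simp [hij]), Finset.sum_insert (by simp)]
  ring

lemma emb_mulVec {i j : Fin D} (hij : i ≠ j) (p q r s : ℂ) (w : Fin D → ℂ) (x : Fin D) :
    (emb i j p q r s *ᵥ w) x =
      if x = i then p * w i + q * w j else if x = j then r * w i + s * w j else w x := by
  rw [Matrix.mulVec, dotProduct]
  by_cases h1 : x = i
  · have hs : ∀ y, (emb i j p q r s) x y * w y
        = (if y = i then p * w i else 0) + (if y = j then q * w j else 0) := by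
      intro y
      by_cases hyi : y = i <;> by_cases hyj : y = j <;>
        simp [emb, h1, hyi, hyj, hij] <;> simp_all
    simp only [hs]
    rw [Finset.sum_add_distrib, Finset.sum_ite_eq', Finset.sum_ite_eq']
    simp [h1]
  · by_cases h2 : x = j
    · have hs : ∀ y, (emb i j p q r s) x y * w y
          = (if y = i then r * w i else 0) + (if y = j then s * w j else 0) := by
        intro y
        by_cases hyi : y = i <;> by_cases hyj : y = j <;>
          simp [emb, h1, h2, hyi, hyj, hij] <;> simp_all
      simp only [hs]
      rw [Finset.sum_add_distrib, Finset.sum_ite_eq', Finset.sum_ite_eq']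
      simp [h1, h2, Ne.symm hij]
    · have hs : ∀ y, (emb i j p q r s) x y * w y = if y = x then w x else 0 := by
        intro y
        by_cases hyx : y = x
        · subst hyx; simp [emb, h1, h2]
        · by_cases hyi : y = i <;> by_cases hyj : y = j <;>
            simp [emb, h1, h2, hyi, hyj, hyx, Ne.symm hyx] <;> simp_all
      simp only [hs]
      rw [Finset.sum_ite_eq']
      simp [h1, h2]

lemma emb_mem {i j : Fin D} (hij : i ≠ j) (p q r s : ℂ)
    (h1 : conj p * p + conj r * r = 1) (h2 : conj p * q + conj r * s = 0)
    (h3 : conj q * p + conj s * r = 0) (h4 : conj q * q + conj s * s = 1) :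
    emb i j p q r s ∈ Matrix.unitaryGroup (Fin D) ℂ := by
  rw [Matrix.mem_unitaryGroup_iff']
  ext a b
  rw [Matrix.mul_apply]
  simp only [Matrix.star_apply, RCLike.star_def]
  rw [sum_split hij]
  have htail : ∑ x ∈ (Finset.univ \ {i, j}), conj ((emb i j p q r s) x a) * (emb i j p q r s) x b
      = if a = b ∧ a ≠ i ∧ a ≠ j then 1 else 0 := by
    have hh : ∀ x ∈ (Finset.univ \ {i, j}), conj ((emb i j p q r s) x a) * (emb i j p q r s) x b
        = if x = a then (if a = b ∧ a ≠ i ∧ a ≠ j then 1 else 0) else 0 := by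
      intro x hx
      simp only [Finset.mem_sdiff, Finset.mem_insert, Finset.mem_singleton, Finset.mem_univ,
        true_and] at hx
      push_neg at hx
      obtain ⟨hxi, hxj⟩ := hx
      by_cases hxa : x = a
      · subst hxa
        by_cases hxb : x = b <;> simp [emb, hxi, hxj, hxb] <;> simp_all
      · simp [emb, hxi, hxj, hxa, Ne.symm hxa] <;> simp_all
    rw [Finset.sum_congr rfl hh, Finset.sum_ite_eq']
    by_cases hai : a = i <;> by_cases haj : a = j <;> by_cases hab : a = b <;>
      simp [hai, haj, hab] <;> (intro h; rw [if_neg (by tauto)])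
  rw [htail]
  by_cases hai : a = i <;> by_cases haj : a = j <;> by_cases hbi : b = i <;> by_cases hbj : b = j
  all_goals try exact absurd (hai.symm.trans haj) hij
  all_goals try exact absurd (hbi.symm.trans hbj) hij
  all_goals simp [emb, Matrix.one_apply, hai, haj, hbi, hbj, hij, Ne.symm hij]
  all_goals try linear_combination h1
  all_goals try linear_combination h2
  all_goals try linear_combination h3
  all_goals try linear_combination h4
  all_goals (intro h; subst h; simp_all)


def vv (e₀ : Fin D → ℂ) (U : UG D) : Fin D → ℂ := (U : Matrix (Fin D) (Fin D) ℂ) *ᵥ e₀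

lemma meas_vv (e₀ : Fin D → ℂ) (i : Fin D) : Measurable fun U : UG D => vv e₀ U i := by
  simp only [vv, Matrix.mulVec, dotProduct]
  exact Finset.measurable_sum _ fun j _ => (meas_entry i j).mul measurable_const

lemma sum_conj_mul_vv (e₀ : Fin D → ℂ) (he₀ : ∑ x, ‖e₀ x‖ ^ 2 = 1) (U : UG D) :
    ∑ k, conj (vv e₀ U k) * vv e₀ U k = 1 := by
  have h1 : ∑ k, conj (vv e₀ U k) * vv e₀ U k = star (vv e₀ U) ⬝ᵥ vv e₀ U := rfl
  have hU : star (U : Matrix (Fin D) (Fin D) ℂ) * (U : Matrix (Fin D) (Fin D) ℂ) = 1 :=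
    Matrix.mem_unitaryGroup_iff'.mp U.2
  rw [h1]
  nth_rewrite 2 [vv]
  rw [Matrix.dotProduct_mulVec, vv, Matrix.star_mulVec, Matrix.vecMul_vecMul,
    ← Matrix.star_eq_conjTranspose, hU, Matrix.vecMul_one]
  calc star e₀ ⬝ᵥ e₀ = ∑ x, ((‖e₀ x‖ : ℂ))^2 := by
        simp only [dotProduct, Pi.star_apply]
        exact Finset.sum_congr rfl fun x _ => Complex.conj_mul' (e₀ x)
    _ = 1 := by
        push_cast [← Complex.ofReal_pow]
        rw [← Complex.ofReal_sum, he₀, Complex.ofReal_one]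

lemma norm_vv_le (e₀ : Fin D → ℂ) (he₀ : ∑ x, ‖e₀ x‖ ^ 2 = 1) (U : UG D) (i : Fin D) :
    ‖vv e₀ U i‖ ≤ 1 := by
  have h := sum_conj_mul_vv e₀ he₀ U
  have h2 : ∑ k, (‖vv e₀ U k‖:ℂ)^2 = 1 := by
    rw [← h]; exact Finset.sum_congr rfl fun x _ => (Complex.conj_mul' _).symm
  have h3 : ∑ k, ‖vv e₀ U k‖^2 = 1 := by
    have := congrArg Complex.re h2
    simp only [← Complex.ofReal_pow, Complex.ofReal_re, ← Complex.ofReal_sum, Complex.one_re] at this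
    exact this
  have h4 : ‖vv e₀ U i‖^2 ≤ 1 := by
    rw [← h3]
    exact Finset.single_le_sum (f := fun k => ‖vv e₀ U k‖^2) (fun k _ => sq_nonneg _) (Finset.mem_univ i)
  nlinarith [norm_nonneg (vv e₀ U i)]


def BB (e₀ : Fin D → ℂ) (i j k l : Fin D) (U : UG D) : ℂ :=
  vv e₀ U i * vv e₀ U j * conj (vv e₀ U k) * conj (vv e₀ U l)

def MM (e₀ : Fin D → ℂ) (μ : Measure (UG D)) (i j k l : Fin D) : ℂ :=
  ∫ U, BB e₀ i j k l U ∂μ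

lemma meas_BB (e₀ : Fin D → ℂ) (i j k l : Fin D) : Measurable (BB e₀ i j k l) := by
  have hc : ∀ k : Fin D, Measurable fun U : UG D => conj (vv e₀ U k) :=
    fun k => Complex.continuous_conj.measurable.comp (meas_vv e₀ k)
  exact (((meas_vv e₀ i).mul (meas_vv e₀ j)).mul (hc k)).mul (hc l)

lemma integ_BB (e₀ : Fin D → ℂ) (he₀ : ∑ x, ‖e₀ x‖ ^ 2 = 1) (μ : Measure (UG D))
    (hμprob : IsProbabilityMeasure μ) (i j k l : Fin D) : Integrable (BB e₀ i j k l) μ := by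
  refine Integrable.mono' (integrable_const 1) (meas_BB e₀ i j k l).aestronglyMeasurable ?_
  filter_upwards with U
  have b1 := norm_vv_le e₀ he₀ U i
  have b2 := norm_vv_le e₀ he₀ U j
  have b3 := norm_vv_le e₀ he₀ U k
  have b4 := norm_vv_le e₀ he₀ U l
  have n1 := norm_nonneg (vv e₀ U i)
  have n2 := norm_nonneg (vv e₀ U j)
  have n3 := norm_nonneg (vv e₀ U k)
  have n4 := norm_nonneg (vv e₀ U l)
  simp only [BB, norm_mul, RCLike.norm_conj]
  have h12 : ‖vv e₀ U i‖ * ‖vv e₀ U j‖ ≤ 1 := by nlinarith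
  have h34 : ‖vv e₀ U k‖ * ‖vv e₀ U l‖ ≤ 1 := by nlinarith
  have h12n : 0 ≤ ‖vv e₀ U i‖ * ‖vv e₀ U j‖ := mul_nonneg n1 n2
  have h34n : 0 ≤ ‖vv e₀ U k‖ * ‖vv e₀ U l‖ := mul_nonneg n3 n4
  nlinarith

lemma vv_mul (e₀ : Fin D → ℂ) (g U : UG D) :
    vv e₀ (g * U) = (g : Matrix (Fin D) (Fin D) ℂ) *ᵥ vv e₀ U := by
  show ((g : Matrix (Fin D) (Fin D) ℂ) * (U : Matrix (Fin D) (Fin D) ℂ)) *ᵥ e₀ = _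
  rw [vv, ← Matrix.mulVec_mulVec]

lemma MM_g (e₀ : Fin D → ℂ) (μ : Measure (UG D))
    (hμinv : ∀ g : UG D, μ.map (fun x => g * x) = μ) (g : UG D) (i j k l : Fin D) :
    MM e₀ μ i j k l = ∫ U, BB e₀ i j k l (g * U) ∂μ :=
  (intInv μ hμinv g _ (meas_BB e₀ i j k l)).symm

/-! ### Diagonal phase unitaries -/

def dvec (D : ℕ) (p : Fin D) : Fin D → ℂ := fun x => if x = p then Complex.I else 1

lemma dU_mem (p : Fin D) : Matrix.diagonal (dvec D p) ∈ Matrix.unitaryGroup (Fin D) ℂ := by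
  rw [Matrix.mem_unitaryGroup_iff', Matrix.star_eq_conjTranspose,
    Matrix.diagonal_conjTranspose, Matrix.diagonal_mul_diagonal]
  have : ∀ x, star (dvec D p) x * dvec D p x = 1 := by
    intro x
    by_cases hx : x = p <;> simp [dvec, hx]
  rw [show (fun i => star (dvec D p) i * dvec D p i) = fun _ => 1 from funext this]
  exact Matrix.diagonal_one

def dU (p : Fin D) : UG D := ⟨Matrix.diagonal (dvec D p), dU_mem p⟩

lemma vv_dU (e₀ : Fin D → ℂ) (p : Fin D) (U : UG D) (x : Fin D) :
    vv e₀ (dU p * U) x = dvec D p x * vv e₀ U x := by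
  rw [vv_mul]
  show (Matrix.diagonal (dvec D p) *ᵥ vv e₀ U) x = _
  rw [Matrix.mulVec_diagonal]

lemma MM_phase (e₀ : Fin D → ℂ) (μ : Measure (UG D))
    (hμinv : ∀ g : UG D, μ.map (fun x => g * x) = μ) (i j k l p : Fin D) :
    MM e₀ μ i j k l
      = (dvec D p i * dvec D p j * conj (dvec D p k) * conj (dvec D p l)) * MM e₀ μ i j k l := by
  conv_lhs => rw [MM_g e₀ μ hμinv (dU p)]
  have hpt : ∀ U, BB e₀ i j k l (dU p * U)
      = (dvec D p i * dvec D p j * conj (dvec D p k) * conj (dvec D p l)) * BB e₀ i j k l U := by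
    intro U
    simp only [BB, vv_dU, _root_.map_mul]
    ring
  simp only [hpt]
  rw [MM, integral_const_mul]

lemma cnt_imp {i j k l : Fin D}
    (h : ∀ p : Fin D, ((if i = p then 1 else 0) + (if j = p then 1 else 0) : ℕ)
      = (if k = p then 1 else 0) + (if l = p then 1 else 0)) :
    (i = k ∧ j = l) ∨ (i = l ∧ j = k) := by
  have hi := h i
  have hj := h j
  by_cases h1 : j = i <;> by_cases h2 : k = i <;> by_cases h3 : l = i <;>
    by_cases h4 : k = j <;> by_cases h5 : l = j <;>
    simp only [h1, h2, h3, h4, h5, if_pos rfl, eq_comm] at hi hj ⊢ <;>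
    simp_all <;> omega

lemma MM_zero (e₀ : Fin D → ℂ) (μ : Measure (UG D))
    (hμinv : ∀ g : UG D, μ.map (fun x => g * x) = μ) {i j k l : Fin D}
    (h : ¬((i = k ∧ j = l) ∨ (i = l ∧ j = k))) : MM e₀ μ i j k l = 0 := by
  by_contra hne
  apply h
  apply cnt_imp
  intro p
  have hph := MM_phase e₀ μ hμinv i j k l p
  have h2 : (dvec D p i * dvec D p j * conj (dvec D p k) * conj (dvec D p l) - 1)
      * MM e₀ μ i j k l = 0 := by linear_combination -hph
  have h3 := (mul_eq_zero.mp h2).resolve_right hne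
  have hf : dvec D p i * dvec D p j * conj (dvec D p k) * conj (dvec D p l) = 1 :=
    sub_eq_zero.mp h3
  by_cases hip : i = p <;> by_cases hjp : j = p <;> by_cases hkp : k = p <;>
    by_cases hlp : l = p <;>
    simp only [dvec, hip, hjp, hkp, hlp, if_true, if_false, if_pos rfl, _root_.map_one,
      Complex.conj_I, one_mul, mul_one] at hf ⊢ <;>
    first
      | rfl
      | (norm_num [Complex.ext_iff] at hf)

/-! ### Second moments of modulus: `M2` -/

def B2 (e₀ : Fin D → ℂ) (i k : Fin D) (U : UG D) : ℂ :=
  vv e₀ U i * conj (vv e₀ U k)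

def M2 (e₀ : Fin D → ℂ) (μ : Measure (UG D)) (i k : Fin D) : ℂ :=
  ∫ U, B2 e₀ i k U ∂μ

lemma meas_B2 (e₀ : Fin D → ℂ) (i k : Fin D) : Measurable (B2 e₀ i k) :=
  (meas_vv e₀ i).mul (Complex.continuous_conj.measurable.comp (meas_vv e₀ k))

lemma integ_B2 (e₀ : Fin D → ℂ) (he₀ : ∑ x, ‖e₀ x‖ ^ 2 = 1) (μ : Measure (UG D))
    (hμprob : IsProbabilityMeasure μ) (i k : Fin D) : Integrable (B2 e₀ i k) μ := by
  refine Integrable.mono' (integrable_const 1) (meas_B2 e₀ i k).aestronglyMeasurable ?_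
  filter_upwards with U
  have b1 := norm_vv_le e₀ he₀ U i
  have b3 := norm_vv_le e₀ he₀ U k
  have n1 := norm_nonneg (vv e₀ U i)
  have n3 := norm_nonneg (vv e₀ U k)
  simp only [B2, norm_mul, RCLike.norm_conj]
  nlinarith

/-! ### The swap unitary -/

def sU (i j : Fin D) (hij : i ≠ j) : UG D :=
  ⟨emb i j 0 1 1 0, emb_mem hij 0 1 1 0 (by simp) (by simp) (by simp) (by simp)⟩

lemma vv_sU (e₀ : Fin D → ℂ) {i j : Fin D} (hij : i ≠ j) (U : UG D) (x : Fin D) :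
    vv e₀ (sU i j hij * U) x
      = if x = i then vv e₀ U j else if x = j then vv e₀ U i else vv e₀ U x := by
  rw [vv_mul]
  show (emb i j 0 1 1 0 *ᵥ vv e₀ U) x = _
  rw [emb_mulVec hij]
  by_cases h1 : x = i <;> by_cases h2 : x = j <;> simp [h1, h2]

lemma MM_swap (e₀ : Fin D → ℂ) (μ : Measure (UG D))
    (hμinv : ∀ g : UG D, μ.map (fun x => g * x) = μ) {i j : Fin D} (hij : i ≠ j) :
    MM e₀ μ j j j j = MM e₀ μ i i i i := by
  rw [MM_g e₀ μ hμinv (sU i j hij)]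
  have hpt : ∀ U, BB e₀ j j j j (sU i j hij * U) = BB e₀ i i i i U := by
    intro U
    simp only [BB, vv_sU e₀ hij]
    simp [Ne.symm hij]
  simp only [hpt]
  rfl

lemma M2_swap (e₀ : Fin D → ℂ) (μ : Measure (UG D))
    (hμinv : ∀ g : UG D, μ.map (fun x => g * x) = μ) {i j : Fin D} (hij : i ≠ j) :
    M2 e₀ μ j j = M2 e₀ μ i i := by
  have h := intInv μ hμinv (sU i j hij) (B2 e₀ j j) (meas_B2 e₀ j j)
  rw [M2, ← h]
  have hpt : ∀ U, B2 e₀ j j (sU i j hij * U) = B2 e₀ i i U := by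
    intro U
    simp only [B2, vv_sU e₀ hij]
    simp [Ne.symm hij]
  simp only [hpt]
  rfl

/-! ### Normalizations -/

lemma sum_M2 (e₀ : Fin D → ℂ) (he₀ : ∑ x, ‖e₀ x‖ ^ 2 = 1) (μ : Measure (UG D))
    (hμprob : IsProbabilityMeasure μ) : ∑ x, M2 e₀ μ x x = 1 := by
  simp only [M2]
  rw [← integral_finset_sum _ (fun x _ => integ_B2 e₀ he₀ μ hμprob x x)]
  have hpt : ∀ U, ∑ x, B2 e₀ x x U = 1 := by
    intro U
    rw [← sum_conj_mul_vv e₀ he₀ U]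
    exact Finset.sum_congr rfl fun x _ => mul_comm _ _
  simp only [hpt]
  simp [hμprob.measure_univ]

lemma M2_val (hD : 1 ≤ D) (e₀ : Fin D → ℂ) (he₀ : ∑ x, ‖e₀ x‖ ^ 2 = 1) (μ : Measure (UG D))
    (hμprob : IsProbabilityMeasure μ) (hμinv : ∀ g : UG D, μ.map (fun x => g * x) = μ)
    (i : Fin D) : M2 e₀ μ i i = ((D : ℂ))⁻¹ := by
  have hsum := sum_M2 e₀ he₀ μ hμprob
  have hconst : ∀ x : Fin D, M2 e₀ μ x x = M2 e₀ μ i i := by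
    intro x
    by_cases hx : x = i
    · rw [hx]
    · exact M2_swap e₀ μ hμinv (fun h => hx h.symm)
  rw [Finset.sum_congr rfl (fun x _ => hconst x), Finset.sum_const, Finset.card_univ,
    Fintype.card_fin, nsmul_eq_mul] at hsum
  have hD0 : (D : ℂ) ≠ 0 := Nat.cast_ne_zero.mpr (by omega)
  field_simp at hsum ⊢
  linear_combination hsum

lemma sum_MM_row (e₀ : Fin D → ℂ) (he₀ : ∑ x, ‖e₀ x‖ ^ 2 = 1) (μ : Measure (UG D))
    (hμprob : IsProbabilityMeasure μ) (i : Fin D) :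
    ∑ l, MM e₀ μ i l i l = M2 e₀ μ i i := by
  simp only [MM]
  rw [← integral_finset_sum _ (fun l _ => integ_BB e₀ he₀ μ hμprob i l i l)]
  have hpt : ∀ U, ∑ l, BB e₀ i l i l U = B2 e₀ i i U := by
    intro U
    have h1 : ∀ l : Fin D, BB e₀ i l i l U
        = (vv e₀ U i * conj (vv e₀ U i)) * (conj (vv e₀ U l) * vv e₀ U l) := by
      intro l; rw [BB]; ring
    rw [Finset.sum_congr rfl fun l _ => h1 l, ← Finset.mul_sum, sum_conj_mul_vv e₀ he₀ U,
      mul_one, B2]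
  simp only [hpt]
  rfl

/-! ### The rotation unitary -/

def cc : ℝ := (Real.sqrt 2)⁻¹

lemma cc_sq : (cc : ℂ) * (cc : ℂ) = 2⁻¹ := by
  have h : cc * cc = 2⁻¹ := by
    rw [cc, ← mul_inv, Real.mul_self_sqrt (by norm_num)]
  rw [← Complex.ofReal_mul, h]
  norm_num

lemma cc_conj : conj (cc : ℂ) = (cc : ℂ) := Complex.conj_ofReal cc

def rU (i j : Fin D) (hij : i ≠ j) : UG D :=
  ⟨emb i j (cc : ℂ) (-(cc : ℂ)) (cc : ℂ) (cc : ℂ),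
    emb_mem hij _ _ _ _
      (by rw [cc_conj]; rw [show ((cc:ℂ) * cc + (cc:ℂ) * cc = 2 * ((cc:ℂ) * cc)) from by ring,
            cc_sq]; norm_num)
      (by rw [cc_conj]; ring)
      (by rw [map_neg, cc_conj]; ring)
      (by rw [map_neg, cc_conj]
          rw [show (-(cc:ℂ) * -(cc:ℂ) + (cc:ℂ) * (cc:ℂ) = 2 * ((cc:ℂ) * cc)) from by ring, cc_sq]
          norm_num)⟩

lemma vv_rU (e₀ : Fin D → ℂ) {i j : Fin D} (hij : i ≠ j) (U : UG D) (x : Fin D) :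
    vv e₀ (rU i j hij * U) x
      = if x = i then (cc:ℂ) * vv e₀ U i - (cc:ℂ) * vv e₀ U j
        else if x = j then (cc:ℂ) * vv e₀ U i + (cc:ℂ) * vv e₀ U j
        else vv e₀ U x := by
  rw [vv_mul]
  show (emb i j (cc : ℂ) (-(cc : ℂ)) (cc : ℂ) (cc : ℂ) *ᵥ vv e₀ U) x = _
  rw [emb_mulVec hij]
  by_cases h1 : x = i <;> by_cases h2 : x = j <;> simp [h1, h2] <;> ring

lemma MM_rot (e₀ : Fin D → ℂ) (he₀ : ∑ x, ‖e₀ x‖ ^ 2 = 1) (μ : Measure (UG D))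
    (hμprob : IsProbabilityMeasure μ) (hμinv : ∀ g : UG D, μ.map (fun x => g * x) = μ)
    {i j : Fin D} (hij : i ≠ j) :
    MM e₀ μ i i i i = (cc:ℂ)^4 *
      (MM e₀ μ i i i i + MM e₀ μ j j j j + MM e₀ μ i i j j + MM e₀ μ j j i i
        + 4 * MM e₀ μ i j i j
        - (2 * MM e₀ μ i i i j + 2 * MM e₀ μ i j i i + 2 * MM e₀ μ i j j j
            + 2 * MM e₀ μ j j i j)) := by
  have hpt : ∀ U, BB e₀ i i i i (rU i j hij * U) = (cc:ℂ)^4 *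
      (BB e₀ i i i i U + BB e₀ j j j j U + BB e₀ i i j j U + BB e₀ j j i i U
        + 4 * BB e₀ i j i j U
        - (2 * BB e₀ i i i j U + 2 * BB e₀ i j i i U + 2 * BB e₀ i j j j U
            + 2 * BB e₀ j j i j U)) := by
    intro U
    simp only [BB, vv_rU e₀ hij, eq_self_iff_true, if_true, map_sub, map_add,
      _root_.map_mul, cc_conj]
    ring
  have I1 := integ_BB e₀ he₀ μ hμprob i i i i
  have I2 := integ_BB e₀ he₀ μ hμprob j j j j
  have I3 := integ_BB e₀ he₀ μ hμprob i i j j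
  have I4 := integ_BB e₀ he₀ μ hμprob j j i i
  have I5 := (integ_BB e₀ he₀ μ hμprob i j i j).const_mul (4:ℂ)
  have I6 := (integ_BB e₀ he₀ μ hμprob i i i j).const_mul (2:ℂ)
  have I7 := (integ_BB e₀ he₀ μ hμprob i j i i).const_mul (2:ℂ)
  have I8 := (integ_BB e₀ he₀ μ hμprob i j j j).const_mul (2:ℂ)
  have I9 := (integ_BB e₀ he₀ μ hμprob j j i j).const_mul (2:ℂ)
  have hA2 : Integrable (fun U => BB e₀ i i i i U + BB e₀ j j j j U) μ := by
    exact I1.add I2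
  have hA3 : Integrable (fun U => BB e₀ i i i i U + BB e₀ j j j j U + BB e₀ i i j j U) μ := by
    exact hA2.add I3
  have hA4 : Integrable (fun U => BB e₀ i i i i U + BB e₀ j j j j U + BB e₀ i i j j U
      + BB e₀ j j i i U) μ := by exact hA3.add I4
  have hA5 : Integrable (fun U => BB e₀ i i i i U + BB e₀ j j j j U + BB e₀ i i j j U
      + BB e₀ j j i i U + 4 * BB e₀ i j i j U) μ := by exact hA4.add I5
  have hB2 : Integrable (fun U => 2 * BB e₀ i i i j U + 2 * BB e₀ i j i i U) μ := by
    exact I6.add I7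
  have hB3 : Integrable (fun U => 2 * BB e₀ i i i j U + 2 * BB e₀ i j i i U
      + 2 * BB e₀ i j j j U) μ := by exact hB2.add I8
  have hB4 : Integrable (fun U => 2 * BB e₀ i i i j U + 2 * BB e₀ i j i i U
      + 2 * BB e₀ i j j j U + 2 * BB e₀ j j i j U) μ := by exact hB3.add I9
  conv_lhs => rw [MM_g e₀ μ hμinv (rU i j hij) i i i i]
  simp only [hpt]
  rw [integral_const_mul,
    integral_sub hA5 hB4,
    integral_add hA4 I5,
    integral_add hA3 I4,
    integral_add hA2 I3,
    integral_add I1 I2,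
    integral_add hB3 I9,
    integral_add hB2 I8,
    integral_add I6 I7,
    integral_const_mul, integral_const_mul, integral_const_mul, integral_const_mul,
    integral_const_mul]
  rfl

lemma MM_half (e₀ : Fin D → ℂ) (he₀ : ∑ x, ‖e₀ x‖ ^ 2 = 1) (μ : Measure (UG D))
    (hμprob : IsProbabilityMeasure μ) (hμinv : ∀ g : UG D, μ.map (fun x => g * x) = μ)
    {i j : Fin D} (hij : i ≠ j) :
    MM e₀ μ i j i j = 2⁻¹ * MM e₀ μ i i i i := by
  have hrot := MM_rot e₀ he₀ μ hμprob hμinv hij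
  have hz3 : MM e₀ μ i i j j = 0 := MM_zero e₀ μ hμinv (by simp [hij])
  have hz4 : MM e₀ μ j j i i = 0 := MM_zero e₀ μ hμinv (by simp [Ne.symm hij])
  have hz6 : MM e₀ μ i i i j = 0 := MM_zero e₀ μ hμinv (by simp [hij])
  have hz7 : MM e₀ μ i j i i = 0 := MM_zero e₀ μ hμinv (by simp [Ne.symm hij])
  have hz8 : MM e₀ μ i j j j = 0 := MM_zero e₀ μ hμinv (by simp [hij])
  have hz9 : MM e₀ μ j j i j = 0 := MM_zero e₀ μ hμinv (by simp [Ne.symm hij])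
  have hsw : MM e₀ μ j j j j = MM e₀ μ i i i i := MM_swap e₀ μ hμinv hij
  have hc4 : (cc:ℂ)^4 = 4⁻¹ := by
    rw [show ((cc:ℂ)^4 = ((cc:ℂ) * cc) * ((cc:ℂ) * cc)) from by ring, cc_sq]
    norm_num
  rw [hz3, hz4, hz6, hz7, hz8, hz9, hsw, hc4] at hrot
  linear_combination -hrot

lemma MM_diag_val (hD : 1 ≤ D) (e₀ : Fin D → ℂ) (he₀ : ∑ x, ‖e₀ x‖ ^ 2 = 1)
    (μ : Measure (UG D)) (hμprob : IsProbabilityMeasure μ)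
    (hμinv : ∀ g : UG D, μ.map (fun x => g * x) = μ) (i : Fin D) :
    MM e₀ μ i i i i = 2 * ((D : ℂ) * ((D : ℂ) + 1))⁻¹ := by
  have hrow := sum_MM_row e₀ he₀ μ hμprob i
  rw [M2_val hD e₀ he₀ μ hμprob hμinv i] at hrow
  have hterm : ∀ l : Fin D, MM e₀ μ i l i l
      = 2⁻¹ * MM e₀ μ i i i i + (if l = i then 2⁻¹ * MM e₀ μ i i i i else 0) := by
    intro l
    by_cases hl : l = i
    · rw [if_pos hl, hl]; ring
    · rw [MM_half e₀ he₀ μ hμprob hμinv (fun h => hl h.symm), if_neg hl, add_zero]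
  rw [Finset.sum_congr rfl (fun l _ => hterm l), Finset.sum_add_distrib, Finset.sum_const,
    Finset.card_univ, Fintype.card_fin, Finset.sum_ite_eq' Finset.univ i, if_pos (Finset.mem_univ i),
    nsmul_eq_mul] at hrow
  have hD0 : (D : ℂ) ≠ 0 := Nat.cast_ne_zero.mpr (by omega)
  have hD1 : (D : ℂ) + 1 ≠ 0 := by
    have : ((D + 1 : ℕ) : ℂ) ≠ 0 := Nat.cast_ne_zero.mpr (by omega)
    push_cast at this
    exact this
  field_simp at hrow ⊢
  linear_combination hrow

lemma MM_off_val (hD : 1 ≤ D) (e₀ : Fin D → ℂ) (he₀ : ∑ x, ‖e₀ x‖ ^ 2 = 1)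
    (μ : Measure (UG D)) (hμprob : IsProbabilityMeasure μ)
    (hμinv : ∀ g : UG D, μ.map (fun x => g * x) = μ) {i j : Fin D} (hij : i ≠ j) :
    MM e₀ μ i j i j = ((D : ℂ) * ((D : ℂ) + 1))⁻¹ := by
  rw [MM_half e₀ he₀ μ hμprob hμinv hij, MM_diag_val hD e₀ he₀ μ hμprob hμinv i]
  ring

lemma MM_comm (e₀ : Fin D → ℂ) (μ : Measure (UG D)) (i j : Fin D) :
    MM e₀ μ i j j i = MM e₀ μ i j i j := by
  have hpt : ∀ U, BB e₀ i j j i U = BB e₀ i j i j U := by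
    intro U; rw [BB, BB]; ring
  rw [MM, MM]
  simp only [hpt]

lemma MM_val (hD : 1 ≤ D) (e₀ : Fin D → ℂ) (he₀ : ∑ x, ‖e₀ x‖ ^ 2 = 1)
    (μ : Measure (UG D)) (hμprob : IsProbabilityMeasure μ)
    (hμinv : ∀ g : UG D, μ.map (fun x => g * x) = μ) (i j k l : Fin D) :
    MM e₀ μ i j k l = ((D : ℂ) * ((D : ℂ) + 1))⁻¹ *
      ((if i = k ∧ j = l then 1 else 0) + (if i = l ∧ j = k then 1 else 0)) := by
  by_cases h1 : i = k ∧ j = l <;> by_cases h2 : i = l ∧ j = k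
  · -- both hold : i = j and all four equal
    obtain ⟨rfl, rfl⟩ := h1
    obtain ⟨hij, -⟩ := h2
    subst hij
    rw [MM_diag_val hD e₀ he₀ μ hμprob hμinv i,
      if_pos (show i = i ∧ i = i from ⟨rfl, rfl⟩)]
    ring
  · obtain ⟨rfl, rfl⟩ := h1
    have hij : i ≠ j := by
      intro h; exact h2 ⟨h, h.symm⟩
    rw [MM_off_val hD e₀ he₀ μ hμprob hμinv hij,
      if_pos (show i = i ∧ j = j from ⟨rfl, rfl⟩), if_neg h2]
    ring
  · obtain ⟨rfl, rfl⟩ := h2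
    have hij : i ≠ j := by
      intro h; exact h1 ⟨h, h.symm⟩
    rw [MM_comm, MM_off_val hD e₀ he₀ μ hμprob hμinv hij, if_neg h1,
      if_pos (show i = i ∧ j = j from ⟨rfl, rfl⟩)]
    ring
  · rw [MM_zero e₀ μ hμinv (by tauto), if_neg h1, if_neg h2]
    ring


lemma trace_swap_kron (X Y : Matrix (Fin D) (Fin D) ℂ) :
    (swapOp D * (X ⊗ₖ Y)).trace = (X * Y).trace := by
  have h1 : ∀ p : Fin D × Fin D,
      (swapOp D * (X ⊗ₖ Y)) p p = X p.2 p.1 * Y p.1 p.2 := by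
    intro p
    rw [Matrix.mul_apply]
    have h2 : ∀ q : Fin D × Fin D, swapOp D p q * (X ⊗ₖ Y) q p
        = if q = (p.2, p.1) then X p.2 p.1 * Y p.1 p.2 else 0 := by
      intro q
      by_cases h : q = (p.2, p.1)
      · subst h
        simp [swapOp, Matrix.kroneckerMap_apply]
      · rw [if_neg h, swapOp, Matrix.of_apply, if_neg, zero_mul]
        intro hc
        exact h (Prod.ext hc.2.symm hc.1.symm)
    rw [Finset.sum_congr rfl fun q _ => h2 q, Finset.sum_ite_eq' Finset.univ ((p.2, p.1))]
    simp
  rw [Matrix.trace, Matrix.trace]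
  simp only [Matrix.diag_apply]
  rw [Finset.sum_congr rfl fun p _ => h1 p, Fintype.sum_prod_type, Finset.sum_comm]
  refine Finset.sum_congr rfl fun a _ => ?_
  rw [Matrix.mul_apply]


/-- For a Haar-distributed unitary `U` (i.e. `μ` is a left-invariant Borel probability
measure on `U(D)`) and a fixed unit vector `e₀`, the average of
`|Ue₀⟩⟨Ue₀| ⊗ |Ue₀⟩⟨Ue₀|` equals `(𝟙 + F)/(D(D+1))`, where `F` is the swap operator.
In particular, `Tr(F (X ⊗ Y)) = Tr(XY)` for all `X, Y`. -/
theorem haar_average_twofold {D : ℕ} (hD : 1 ≤ D)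
    (e₀ : Fin D → ℂ) (he₀ : ∑ x, ‖e₀ x‖ ^ 2 = 1)
    (μ : Measure ↥(Matrix.unitaryGroup (Fin D) ℂ))
    (hμprob : IsProbabilityMeasure μ)
    (hμinv : ∀ g : ↥(Matrix.unitaryGroup (Fin D) ℂ), μ.map (fun x => g * x) = μ) :
    (∀ i j k l : Fin D,
      (∫ U : ↥(Matrix.unitaryGroup (Fin D) ℂ),
          (rankOne ((U : Matrix (Fin D) (Fin D) ℂ) *ᵥ e₀) ⊗ₖ
            rankOne ((U : Matrix (Fin D) (Fin D) ℂ) *ᵥ e₀)) (i, j) (k, l) ∂μ)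
        = ((D : ℂ) * ((D : ℂ) + 1))⁻¹ *
            ((1 + swapOp D) (i, j) (k, l))) ∧
    (∀ X Y : Matrix (Fin D) (Fin D) ℂ, (swapOp D * (X ⊗ₖ Y)).trace = (X * Y).trace) := by
  constructor
  · intro i j k l
    have hpt : ∀ U : ↥(Matrix.unitaryGroup (Fin D) ℂ),
        (rankOne ((U : Matrix (Fin D) (Fin D) ℂ) *ᵥ e₀) ⊗ₖ
          rankOne ((U : Matrix (Fin D) (Fin D) ℂ) *ᵥ e₀)) (i, j) (k, l)
        = BB e₀ i j k l U := by
      intro U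
      simp only [Matrix.kroneckerMap_apply, rankOne, Matrix.vecMulVec_apply, Pi.star_apply,
        RCLike.star_def, BB, vv]
      ring
    simp only [hpt]
    have := MM_val hD e₀ he₀ μ hμprob hμinv i j k l
    rw [MM] at this
    rw [this]
    congr 1
    rw [Matrix.add_apply, Matrix.one_apply, swapOp, Matrix.of_apply]
    congr 1
    by_cases h : (i, j) = (k, l)
    · rw [if_pos h, if_pos ⟨congrArg Prod.fst h, congrArg Prod.snd h⟩]
    · rw [if_neg h, if_neg]
      intro hc
      exact h (Prod.ext hc.1 hc.2)
  · exact trace_swap_kron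

end
end
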